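/- arXiv:2303.04453 — 4 statements merged into one kernel-verified Lean document; each statement's English description precedes it below -/
import Mathlib

section
/- Fix an integer t ≥ 1. There exist a constant c ∈ ℕ and a decoder relation D : ℕ → ℕ → Prop such that for every n ≥ 2 and every n-vertex finite bipartite graph G with a given bipartition (U, W) containing no one-sided induced copy of F_{t,1} with its star centers in U (i.e., no induced subgraph isomorphic to the disjoint union of a star K_{1,t}, a single edge K₂, and one isolated vertex, in which the vertex of degree t lies in U and the isolated vertex lies in W), there is an injective labeling ℓ : V(G) → Fin (n ^ c) such that for all distinct vertices u, v of G, u and v are adjacent in G if and only if D (ℓ u) (ℓ v) holds. -/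
open SimpleGraph

/-- `F_{t,p}`: two stars `K_{1,t}` and `K_{1,p}` with their centers (`inl 0` and `inl 1`)
in one part of the bipartition, plus an isolated vertex (`inr (t+p)`) in the other part.
In particular `F_{t,1}` is the disjoint union of `K_{1,t}` (center `inl 0`, the vertex of
degree `t`), a single edge `K₂` (its endpoint `inl 1` in the same part as the star
center), and the isolated vertex `inr (t+1)` in the opposite part. -/
def Ftp (t p : ℕ) : SimpleGraph (Fin 2 ⊕ Fin (t + p + 1)) :=
  SimpleGraph.fromRel fun u v =>
    match u, v with
    | Sum.inl a, Sum.inr b => (a = 0 ∧ (b : ℕ) < t) ∨ (a = 1 ∧ t ≤ (b : ℕ) ∧ (b : ℕ) < t + p)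
    | _, _ => False

namespace S10


lemma pair_lt {a b m : ℕ} (ha : a < m) (hb : b < m) : Nat.pair a b < m ^ 2 := by
  unfold Nat.pair
  split
  · nlinarith
  · nlinarith

def encL : List ℕ → ℕ
  | [] => 0
  | x :: xs => Nat.pair x (encL xs)

def fld : ℕ → ℕ → ℕ
  | 0, x => (Nat.unpair x).1
  | (k+1), x => fld k (Nat.unpair x).2

lemma fld_zero_zero : ∀ k, fld k 0 = 0 := by
  intro k; induction k with
  | zero => simp [fld]
  | succ k ih => simp [fld, Nat.unpair_zero, ih]

lemma fld_encL : ∀ (xs : List ℕ) (k : ℕ), fld k (encL xs) = xs.getD k 0 := by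
  intro xs
  induction xs with
  | nil => intro k; simp [encL, fld_zero_zero]
  | cons x xs ih =>
    intro k
    cases k with
    | zero => simp [encL, fld, Nat.unpair_pair]
    | succ k => simp [encL, fld, Nat.unpair_pair, ih]

lemma encL_lt {m : ℕ} (hm : 1 ≤ m) :
    ∀ xs : List ℕ, (∀ x ∈ xs, x < m) → encL xs < m ^ (2 ^ xs.length) := by
  intro xs
  induction xs with
  | nil => intro _; simp [encL]; exact hm
  | cons x xs ih =>
    intro h
    have hx : x < m ^ (2 ^ xs.length) := by
      calc x < m := h x (by simp)
      _ ≤ m ^ (2 ^ xs.length) := Nat.le_self_pow (by positivity) m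
    have hrec : encL xs < m ^ (2 ^ xs.length) := ih (fun y hy => h y (by simp [hy]))
    have := pair_lt hx hrec
    calc encL (x :: xs) < (m ^ (2 ^ xs.length)) ^ 2 := this
    _ = m ^ (2 ^ (x :: xs).length) := by
        rw [← pow_mul, List.length_cons, pow_succ]



lemma fld_cons_zero (x : ℕ) (xs : List ℕ) : fld 0 (encL (x :: xs)) = x := by
  simp [encL, fld, Nat.unpair_pair]

lemma fld_cons_succ (k x : ℕ) (xs : List ℕ) : fld (k+1) (encL (x :: xs)) = fld k (encL xs) := by
  simp [encL, fld, Nat.unpair_pair]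

lemma mem_encL_list : ∀ (xs : List ℕ) (z : ℕ),
    (∃ k, k < xs.length ∧ fld k (encL xs) = z) ↔ z ∈ xs := by
  intro xs
  induction xs with
  | nil => intro z; simp
  | cons x xs ih =>
    intro z
    constructor
    · rintro ⟨k, hk, hfld⟩
      cases k with
      | zero =>
        rw [fld_cons_zero] at hfld
        exact hfld ▸ (List.mem_cons_self : x ∈ x :: xs)
      | succ k =>
        rw [fld_cons_succ] at hfld
        have : z ∈ xs := (ih z).mp ⟨k, by simpa using hk, hfld⟩
        exact List.mem_cons_of_mem x this
    · intro hz
      rcases List.mem_cons.mp hz with h | h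
      · exact ⟨0, by simp, by rw [fld_cons_zero]; exact h.symm⟩
      · obtain ⟨k, hk, hfld⟩ := (ih z).mpr h
        exact ⟨k+1, by simpa using hk, by rw [fld_cons_succ]; exact hfld⟩

lemma fld_shift (x0 x1 x2 x3 x4 : ℕ) (rest : List ℕ) (k : ℕ) :
    fld (5+k) (encL (x0 :: x1 :: x2 :: x3 :: x4 :: rest)) = fld k (encL rest) := by
  rw [show 5+k = (4+k)+1 by omega, fld_cons_succ,
      show 4+k = (3+k)+1 by omega, fld_cons_succ,
      show 3+k = (2+k)+1 by omega, fld_cons_succ,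
      show 2+k = (1+k)+1 by omega, fld_cons_succ,
      show 1+k = k+1 by omega, fld_cons_succ]

def Dt (t : ℕ) : ℕ → ℕ → Prop := fun x y =>
  (fld 0 x = 1 ∧ fld 0 y = 0 ∧
    ((fld 3 x ≤ fld 2 y ∧ fld 2 y < fld 4 x) ↔ (∃ k, k < 2*t ∧ fld (5+k) x = fld 1 y)))
  ∨
  (fld 0 x = 0 ∧ fld 0 y = 1 ∧
    ((fld 3 y ≤ fld 2 x ∧ fld 2 x < fld 4 y) ↔ (∃ k, k < 2*t ∧ fld (5+k) y = fld 1 x)))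

lemma Dt_symm (t : ℕ) (x y : ℕ) : Dt t x y ↔ Dt t y x := by
  constructor <;> rintro (⟨h1, h2, h3⟩ | ⟨h1, h2, h3⟩)
  · exact Or.inr ⟨h2, h1, h3⟩
  · exact Or.inl ⟨h2, h1, h3⟩
  · exact Or.inr ⟨h2, h1, h3⟩
  · exact Or.inl ⟨h2, h1, h3⟩


open scoped symmDiff

lemma lamcore {α I : Type*} [DecidableEq α] (t : ℕ) (F : I → Finset α) :
    ∀ (N : ℕ) (s : Finset I), s.card ≤ N →
    (∀ i ∈ s, ∀ j ∈ s, F i ⊆ F j ∨ F j ⊆ F i ∨ F i ∩ F j = ∅ ∨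
      ((F i \ F j).card < t ∧ (F j \ F i).card < t)) →
    ∃ core : I → Finset α,
      (∀ i ∈ s, ∃ j ∈ s, core i = F j) ∧
      (∀ i ∈ s, ((F i) ∆ (core i)).card ≤ 2 * t) ∧
      (∀ i ∈ s, ∀ j ∈ s, core i ⊆ core j ∨ core j ⊆ core i ∨ core i ∩ core j = ∅) := by
  classical
  intro N
  induction N with
  | zero =>
    intro s hcard _
    have hs : s = ∅ := Finset.card_eq_zero.mp (Nat.le_zero.mp hcard)
    subst hs
    exact ⟨fun _ => ∅, by simp, by simp, by simp⟩
  | succ N ih =>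
    intro s hcard hyp
    rcases eq_or_ne s ∅ with hs | hs
    · subst hs; exact ⟨fun _ => ∅, by simp, by simp, by simp⟩
    · obtain ⟨k, hk, hkmax⟩ := Finset.exists_max_image s (fun i => (F i).card)
        (Finset.nonempty_iff_ne_empty.mpr hs)
      rcases eq_or_ne (F k) ∅ with hFk | hFk
      · -- all sets empty
        have hall : ∀ i ∈ s, F i = ∅ := by
          intro i hi
          have h1 := hkmax i hi
          rw [hFk] at h1
          simp only [Finset.card_empty, Nat.le_zero] at h1
          exact Finset.card_eq_zero.mp h1
        refine ⟨F, fun i hi => ⟨i, hi, rfl⟩, ?_, ?_⟩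
        · intro i hi; simp [symmDiff_self]
        · intro i hi j hj
          right; right
          rw [hall i hi]; simp
      · -- main case
        set s₁ := s.filter (fun i => F i ⊂ F k) with hs₁
        set s₂ := s.filter (fun i => ¬ F i ⊂ F k ∧ F i ∩ F k = ∅) with hs₂
        have hk1 : k ∉ s₁ := by
          simp only [hs₁, Finset.mem_filter, not_and]
          exact fun _ h => ssubset_irrefl _ h
        have hk2 : k ∉ s₂ := by
          simp only [hs₂, Finset.mem_filter, not_and]
          intro _ h
          exact fun hint => hFk (by simpa using hint)
        have hsub1 : s₁ ⊆ s := Finset.filter_subset _ _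
        have hsub2 : s₂ ⊆ s := Finset.filter_subset _ _
        have hc1 : s₁.card ≤ N := by
          have := Finset.card_lt_card (Finset.ssubset_iff_of_subset hsub1 |>.mpr ⟨k, hk, hk1⟩)
          omega
        have hc2 : s₂.card ≤ N := by
          have := Finset.card_lt_card (Finset.ssubset_iff_of_subset hsub2 |>.mpr ⟨k, hk, hk2⟩)
          omega
        obtain ⟨core₁, hmem₁, herr₁, hlam₁⟩ := ih s₁ hc1
          (fun i hi j hj => hyp i (hsub1 hi) j (hsub1 hj))
        obtain ⟨core₂, hmem₂, herr₂, hlam₂⟩ := ih s₂ hc2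
          (fun i hi j hj => hyp i (hsub2 hi) j (hsub2 hj))
        set core : I → Finset α := fun i =>
          if i ∈ s₁ then core₁ i else if i ∈ s₂ then core₂ i else F k with hcore
        -- key facts about cores from the sub-families
        have hin1 : ∀ i ∈ s₁, core₁ i ⊆ F k := by
          intro i hi
          obtain ⟨j, hj, hje⟩ := hmem₁ i hi
          rw [hje]
          have : F j ⊂ F k := (Finset.mem_filter.mp hj).2
          exact this.subset
        have hin2 : ∀ i ∈ s₂, core₂ i ∩ F k = ∅ := by
          intro i hi
          obtain ⟨j, hj, hje⟩ := hmem₂ i hi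
          rw [hje]
          exact (Finset.mem_filter.mp hj).2.2
        -- error bound in the "top" case
        have htop : ∀ i ∈ s, i ∉ s₁ → i ∉ s₂ → ((F i) ∆ (F k)).card ≤ 2 * t := by
          intro i hi hi1 hi2
          have hni2 : ¬ (¬ F i ⊂ F k ∧ F i ∩ F k = ∅) := by
            intro h; exact hi2 (Finset.mem_filter.mpr ⟨hi, h⟩)
          have hni1 : ¬ F i ⊂ F k := by
            intro h; exact hi1 (Finset.mem_filter.mpr ⟨hi, h⟩)
          rcases hyp i hi k hk with h | h | h | h
          · rcases h.ssubset_or_eq with h' | h'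
            · exact absurd h' hni1
            · rw [h']; simp [symmDiff_self]
          · have h' : F k = F i := Finset.eq_of_subset_of_card_le h (hkmax i hi)
            rw [← h']; simp [symmDiff_self]
          · exact absurd ⟨hni1, h⟩ hni2
          · rw [symmDiff_def, Finset.sup_eq_union]
            calc ((F i \ F k) ∪ (F k \ F i)).card
                ≤ (F i \ F k).card + (F k \ F i).card := Finset.card_union_le _ _
              _ ≤ 2 * t := by omega
        refine ⟨core, ?_, ?_, ?_⟩
        · intro i hi
          by_cases h1 : i ∈ s₁
          · obtain ⟨j, hj, hje⟩ := hmem₁ i h1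
            exact ⟨j, hsub1 hj, by simp [hcore, h1, hje]⟩
          · by_cases h2 : i ∈ s₂
            · obtain ⟨j, hj, hje⟩ := hmem₂ i h2
              exact ⟨j, hsub2 hj, by simp [hcore, h1, h2, hje]⟩
            · exact ⟨k, hk, by simp [hcore, h1, h2]⟩
        · intro i hi
          by_cases h1 : i ∈ s₁
          · simpa [hcore, h1] using herr₁ i h1
          · by_cases h2 : i ∈ s₂
            · simpa [hcore, h1, h2] using herr₂ i h2
            · simpa [hcore, h1, h2] using htop i hi h1 h2
        · have hcsub : ∀ x ∈ s₁, core x ⊆ F k := by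
            intro x hx
            simp only [hcore, hx, if_pos]
            exact hin1 x hx
          have hcdis : ∀ x ∈ s₂, core x ∩ F k = ∅ := by
            intro x hx
            have hx1 : x ∉ s₁ := by
              intro hx1
              have h1 := (Finset.mem_filter.mp hx).2.1
              exact h1 (Finset.mem_filter.mp hx1).2
            simp only [hcore, hx1, if_neg, hx, if_pos, if_false]
            exact hin2 x hx
          have hctop : ∀ x ∈ s, x ∉ s₁ → x ∉ s₂ → core x = F k := by
            intro x _ hx1 hx2; simp [hcore, hx1, hx2]
          have hdisj12 : ∀ x ∈ s₁, ∀ y ∈ s₂, core x ∩ core y = ∅ := by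
            intro x hx y hy
            apply Finset.subset_empty.mp
            intro z hz
            rw [Finset.mem_inter] at hz
            rw [← hcdis y hy, Finset.mem_inter]
            exact ⟨hz.2, hcsub x hx hz.1⟩
          intro i hi j hj
          by_cases hi1 : i ∈ s₁
          · by_cases hj1 : j ∈ s₁
            · simpa [hcore, hi1, hj1] using hlam₁ i hi1 j hj1
            · by_cases hj2 : j ∈ s₂
              · exact Or.inr (Or.inr (hdisj12 i hi1 j hj2))
              · exact Or.inl (by rw [hctop j hj hj1 hj2]; exact hcsub i hi1)
          · by_cases hi2 : i ∈ s₂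
            · by_cases hj1 : j ∈ s₁
              · exact Or.inr (Or.inr (by rw [Finset.inter_comm]; exact hdisj12 j hj1 i hi2))
              · by_cases hj2 : j ∈ s₂
                · simpa [hcore, hi1, hi2, hj1, hj2] using hlam₂ i hi2 j hj2
                · exact Or.inr (Or.inr (by rw [hctop j hj hj1 hj2]; exact hcdis i hi2))
            · by_cases hj1 : j ∈ s₁
              · exact Or.inr (Or.inl (by rw [hctop i hi hi1 hi2]; exact hcsub j hj1))
              · by_cases hj2 : j ∈ s₂
                · exact Or.inr (Or.inr (by
                    rw [hctop i hi hi1 hi2, Finset.inter_comm]; exact hcdis j hj2))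
                · exact Or.inl (by rw [hctop i hi hi1 hi2, hctop j hj hj1 hj2])



lemma lamint {α I : Type*} [DecidableEq α] (L : I → Finset α) :
    ∀ (N : ℕ) (s : Finset I) (Wg : Finset α), s.card ≤ N →
    (∀ i ∈ s, L i ⊆ Wg) →
    (∀ i ∈ s, ∀ j ∈ s, L i ⊆ L j ∨ L j ⊆ L i ∨ L i ∩ L j = ∅) →
    ∃ (pos : α → ℕ) (a b : I → ℕ),
      (∀ x ∈ Wg, pos x < Wg.card) ∧
      ∀ i ∈ s, a i ≤ b i ∧ b i ≤ Wg.card ∧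
        L i = Wg.filter (fun x => a i ≤ pos x ∧ pos x < b i) := by
  classical
  intro N
  induction N with
  | zero =>
    intro s Wg hcard _ _
    have hs : s = ∅ := Finset.card_eq_zero.mp (Nat.le_zero.mp hcard)
    subst hs
    refine ⟨fun x => if h : x ∈ Wg then (Wg.equivFin ⟨x, h⟩ : ℕ) else 0, fun _ => 0,
      fun _ => 0, ?_, by simp⟩
    intro x hx
    simp only [hx, dif_pos]
    exact (Wg.equivFin ⟨x, hx⟩).isLt
  | succ N ih =>
    intro s Wg hcard hW hlam
    rcases eq_or_ne s ∅ with hs | hs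
    · subst hs
      refine ⟨fun x => if h : x ∈ Wg then (Wg.equivFin ⟨x, h⟩ : ℕ) else 0, fun _ => 0,
        fun _ => 0, ?_, by simp⟩
      intro x hx
      simp only [hx, dif_pos]
      exact (Wg.equivFin ⟨x, hx⟩).isLt
    · obtain ⟨k, hk, hkmax⟩ := Finset.exists_max_image s (fun i => (L i).card)
        (Finset.nonempty_iff_ne_empty.mpr hs)
      set K := L k with hK
      have hKW : K ⊆ Wg := hW k hk
      set s₁ := s.filter (fun i => L i ⊂ K) with hs₁
      set s₂ := s.filter (fun i => ¬ L i ⊆ K) with hs₂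
      have hk1 : k ∉ s₁ := by
        simp only [hs₁, Finset.mem_filter, not_and]
        exact fun _ h => ssubset_irrefl _ h
      have hk2 : k ∉ s₂ := by
        simp only [hs₂, Finset.mem_filter, not_and, not_not]
        exact fun _ => subset_rfl
      have hsub1 : s₁ ⊆ s := Finset.filter_subset _ _
      have hsub2 : s₂ ⊆ s := Finset.filter_subset _ _
      have hc1 : s₁.card ≤ N := by
        have := Finset.card_lt_card (Finset.ssubset_iff_of_subset hsub1 |>.mpr ⟨k, hk, hk1⟩)
        omega
      have hc2 : s₂.card ≤ N := by
        have := Finset.card_lt_card (Finset.ssubset_iff_of_subset hsub2 |>.mpr ⟨k, hk, hk2⟩)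
        omega
      -- sets in s₂ are disjoint from K
      have hdis2 : ∀ i ∈ s₂, L i ∩ K = ∅ := by
        intro i hi
        have hns : ¬ L i ⊆ K := (Finset.mem_filter.mp hi).2
        rcases hlam i (hsub2 hi) k hk with h | h | h
        · exact absurd h hns
        · exact absurd ((Finset.eq_of_subset_of_card_le h (hkmax i (hsub2 hi))) ▸
            subset_rfl : L i ⊆ K) hns
        · exact h
      obtain ⟨pos₁, a₁, b₁, hpos₁, hint₁⟩ := ih s₁ K hc1
        (fun i hi => (Finset.mem_filter.mp hi).2.subset)
        (fun i hi j hj => hlam i (hsub1 hi) j (hsub1 hj))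
      obtain ⟨pos₂, a₂, b₂, hpos₂, hint₂⟩ := ih s₂ (Wg \ K) hc2
        (fun i hi => by
          rw [Finset.subset_sdiff]
          exact ⟨hW i (hsub2 hi), Finset.disjoint_iff_inter_eq_empty.mpr (hdis2 i hi)⟩)
        (fun i hi j hj => hlam i (hsub2 hi) j (hsub2 hj))
      set pos : α → ℕ := fun x => if x ∈ K then pos₁ x else K.card + pos₂ x with hpos
      have hKc : K.card ≤ Wg.card := Finset.card_le_card hKW
      have hcards : K.card + (Wg \ K).card = Wg.card := by
        rw [Finset.card_sdiff_of_subset hKW]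
        omega
      have hposK : ∀ x, x ∈ K → pos x = pos₁ x := by
        intro x hx; simp [hpos, hx]
      have hposNK : ∀ x, x ∉ K → pos x = K.card + pos₂ x := by
        intro x hx; simp [hpos, hx]
      have hposbig : ∀ x, x ∉ K → K.card ≤ pos x := by
        intro x hx; rw [hposNK x hx]; omega
      have hposlt : ∀ x, x ∈ K → pos x < K.card := by
        intro x hx; rw [hposK x hx]; exact hpos₁ x hx
      refine ⟨pos,
        fun i => if i ∈ s₁ then a₁ i else if i ∈ s₂ then K.card + a₂ i else 0,
        fun i => if i ∈ s₁ then b₁ i else if i ∈ s₂ then K.card + b₂ i else K.card,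
        ?_, ?_⟩
      · intro x hx
        by_cases hxK : x ∈ K
        · exact lt_of_lt_of_le (hposlt x hxK) hKc
        · rw [hposNK x hxK]
          have := hpos₂ x (Finset.mem_sdiff.mpr ⟨hx, hxK⟩)
          omega
      · intro i hi
        by_cases hi1 : i ∈ s₁
        · simp only [hi1, if_pos]
          obtain ⟨hab, hbc, hLi⟩ := hint₁ i hi1
          refine ⟨hab, le_trans hbc hKc, ?_⟩
          rw [hLi]
          ext x
          simp only [Finset.mem_filter]
          constructor
          · rintro ⟨hxK, h1, h2⟩
            exact ⟨hKW hxK, by rw [hposK x hxK]; exact ⟨h1, h2⟩⟩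
          · rintro ⟨hxW, h1, h2⟩
            by_cases hxK : x ∈ K
            · rw [hposK x hxK] at h1 h2
              exact ⟨hxK, h1, h2⟩
            · exfalso
              have := hposbig x hxK
              omega
        · by_cases hi2 : i ∈ s₂
          · simp only [hi1, if_neg, hi2, if_pos, if_false]
            obtain ⟨hab, hbc, hLi⟩ := hint₂ i hi2
            refine ⟨by omega, by omega, ?_⟩
            rw [hLi]
            ext x
            simp only [Finset.mem_filter, Finset.mem_sdiff]
            constructor
            · rintro ⟨⟨hxW, hxK⟩, h1, h2⟩
              rw [hposNK x hxK]
              exact ⟨hxW, by omega, by omega⟩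
            · rintro ⟨hxW, h1, h2⟩
              by_cases hxK : x ∈ K
              · exfalso
                have := hposlt x hxK
                omega
              · rw [hposNK x hxK] at h1 h2
                exact ⟨⟨hxW, hxK⟩, by omega, by omega⟩
          · -- L i = K
            have hLiK : L i = K := by
              have h1 : ¬ L i ⊂ K := fun h => hi1 (Finset.mem_filter.mpr ⟨hi, h⟩)
              have h2 : L i ⊆ K := by
                by_contra h2
                exact hi2 (Finset.mem_filter.mpr ⟨hi, h2⟩)
              rcases h2.ssubset_or_eq with h | h
              · exact absurd h h1
              · exact h
            simp only [hi1, if_neg, hi2, if_false]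
            refine ⟨Nat.zero_le _, hKc, ?_⟩
            rw [hLiK]
            ext x
            simp only [Finset.mem_filter]
            constructor
            · intro hxK
              exact ⟨hKW hxK, Nat.zero_le _, hposlt x hxK⟩
            · rintro ⟨hxW, _, h2⟩
              by_contra hxK
              have := hposbig x hxK
              omega



lemma phase1 {n t : ℕ} (G : SimpleGraph (Fin n)) (side : Fin n → Bool)
    (hbip : ∀ u v : Fin n, G.Adj u v → side u ≠ side v)
    (M : Fin n → Finset (Fin n))
    (hM : ∀ u w, w ∈ M u ↔ (side w = false ∧ ¬ G.Adj u w))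
    (u0 u1 : Fin n) (h0 : side u0 = true) (h1 : side u1 = true) (hne : u0 ≠ u1)
    (hcard : t ≤ ((M u1) \ (M u0)).card)
    (hd : ((M u0) \ (M u1)).Nonempty)
    (hint : ((M u0) ∩ (M u1)).Nonempty) :
    ∃ f : Ftp t 1 ↪g G,
      side (f (Sum.inl 0)) = true ∧ side (f (Sum.inl 1)) = true ∧
      side (f (Sum.inr (Fin.last (t + 1)))) = false := by
  classical
  obtain ⟨S, hSsub, hScard⟩ := Finset.exists_subset_card_eq hcard
  obtain ⟨w', hw'⟩ := hd
  obtain ⟨w'', hw''⟩ := hint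
  rw [Finset.mem_sdiff] at hw'
  rw [Finset.mem_inter] at hw''
  set g : Fin t → Fin n := fun i => (S.orderIsoOfFin hScard i : Fin n) with hg
  have hginj : Function.Injective g := fun i j hij =>
    (S.orderIsoOfFin hScard).injective (Subtype.ext hij)
  have hgmem : ∀ i, g i ∈ M u1 ∧ g i ∉ M u0 := by
    intro i
    have h := hSsub (S.orderIsoOfFin hScard i).2
    rwa [Finset.mem_sdiff] at h
  have hside_g : ∀ i, side (g i) = false := fun i => ((hM u1 (g i)).mp (hgmem i).1).1
  have hadj0g : ∀ i, G.Adj u0 (g i) := by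
    intro i
    by_contra h
    exact (hgmem i).2 ((hM u0 (g i)).mpr ⟨hside_g i, h⟩)
  have hnadj1g : ∀ i, ¬ G.Adj u1 (g i) := fun i => ((hM u1 (g i)).mp (hgmem i).1).2
  have hside_w' : side w' = false := ((hM u0 w').mp hw'.1).1
  have hnadj0w' : ¬ G.Adj u0 w' := ((hM u0 w').mp hw'.1).2
  have hadj1w' : G.Adj u1 w' := by
    by_contra h
    exact hw'.2 ((hM u1 w').mpr ⟨hside_w', h⟩)
  have hside_w'' : side w'' = false := ((hM u0 w'').mp hw''.1).1
  have hnadj0w'' : ¬ G.Adj u0 w'' := ((hM u0 w'').mp hw''.1).2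
  have hnadj1w'' : ¬ G.Adj u1 w'' := ((hM u1 w'').mp hw''.2).2
  set f : (Fin 2 ⊕ Fin (t + 1 + 1)) → Fin n := fun x =>
    match x with
    | Sum.inl a => if a = 0 then u0 else u1
    | Sum.inr b => if h : (b : ℕ) < t then g ⟨b, h⟩ else if (b : ℕ) = t then w' else w''
    with hf
  have hfl0 : f (Sum.inl 0) = u0 := by simp [hf]
  have hfl1 : f (Sum.inl 1) = u1 := by
    have : (1 : Fin 2) ≠ 0 := by decide
    simp [hf, this]
  have hfl : ∀ a : Fin 2, f (Sum.inl a) = u0 ∨ f (Sum.inl a) = u1 := by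
    intro a; by_cases h : a = 0 <;> simp [hf, h]
  have hsidel : ∀ a : Fin 2, side (f (Sum.inl a)) = true := by
    intro a; rcases hfl a with h | h <;> rw [h] <;> assumption
  have hsider : ∀ b : Fin (t + 1 + 1), side (f (Sum.inr b)) = false := by
    intro b
    by_cases h : (b : ℕ) < t
    · simp only [hf]; rw [dif_pos h]; exact hside_g _
    · by_cases h' : (b : ℕ) = t
      · simp only [hf]; rw [dif_neg h, if_pos h']; exact hside_w'
      · simp only [hf]; rw [dif_neg h, if_neg h']; exact hside_w''
  have hadj0r : ∀ b : Fin (t + 1 + 1), G.Adj u0 (f (Sum.inr b)) ↔ (b : ℕ) < t := by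
    intro b
    by_cases h : (b : ℕ) < t
    · simp only [hf]; rw [dif_pos h]; exact iff_of_true (hadj0g _) h
    · by_cases h' : (b : ℕ) = t
      · simp only [hf]; rw [dif_neg h, if_pos h']; exact iff_of_false hnadj0w' h
      · simp only [hf]; rw [dif_neg h, if_neg h']; exact iff_of_false hnadj0w'' h
  have hadj1r : ∀ b : Fin (t + 1 + 1), G.Adj u1 (f (Sum.inr b)) ↔ (b : ℕ) = t := by
    intro b
    by_cases h : (b : ℕ) < t
    · simp only [hf]; rw [dif_pos h]
      exact iff_of_false (hnadj1g _) (by omega)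
    · by_cases h' : (b : ℕ) = t
      · simp only [hf]; rw [dif_neg h, if_pos h']; exact iff_of_true hadj1w' h'
      · simp only [hf]; rw [dif_neg h, if_neg h']; exact iff_of_false hnadj1w'' h'
  have hmem0 : ∀ b : Fin (t + 1 + 1), f (Sum.inr b) ∈ M u0 ↔ ¬ (b : ℕ) < t := by
    intro b
    rw [hM]
    constructor
    · intro h
      intro hlt
      exact h.2 (by rw [← (hadj0r b)] at hlt; exact hlt)
    · intro h
      exact ⟨hsider b, fun ha => h ((hadj0r b).mp ha)⟩
  have hmem1 : ∀ b : Fin (t + 1 + 1), f (Sum.inr b) ∈ M u1 ↔ ¬ (b : ℕ) = t := by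
    intro b
    rw [hM]
    constructor
    · intro h heq
      exact h.2 ((hadj1r b).mpr heq)
    · intro h
      exact ⟨hsider b, fun ha => h ((hadj1r b).mp ha)⟩
  have hinj : Function.Injective f := by
    intro x y hxy
    match x, y with
    | Sum.inl a, Sum.inl a' =>
      by_cases ha : a = 0 <;> by_cases ha' : a' = 0
      · rw [ha, ha']
      · exfalso
        rw [hf] at hxy
        simp only [ha, ha', if_pos, if_neg, if_true, if_false] at hxy
        exact hne hxy
      · exfalso
        rw [hf] at hxy
        simp only [ha, ha', if_pos, if_neg, if_true, if_false] at hxy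
        exact hne hxy.symm
      · have hv : (a : ℕ) = 1 := by omega
        have hv' : (a' : ℕ) = 1 := by omega
        congr 1
        exact Fin.ext (by rw [hv, hv'])
    | Sum.inl a, Sum.inr b =>
      exfalso
      have h1 := hsidel a
      rw [hxy, hsider b] at h1
      exact Bool.false_ne_true h1
    | Sum.inr b, Sum.inl a =>
      exfalso
      have h1 := hsidel a
      rw [← hxy, hsider b] at h1
      exact Bool.false_ne_true h1
    | Sum.inr b, Sum.inr b' =>
      have e0 : (¬ (b : ℕ) < t) ↔ (¬ (b' : ℕ) < t) := by
        rw [← hmem0 b, ← hmem0 b', hxy]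
      have e1 : (¬ (b : ℕ) = t) ↔ (¬ (b' : ℕ) = t) := by
        rw [← hmem1 b, ← hmem1 b', hxy]
      congr 1
      by_cases hb : (b : ℕ) < t
      · have hb' : (b' : ℕ) < t := by tauto
        have hxy' : g ⟨b, hb⟩ = g ⟨b', hb'⟩ := by
          have := hxy
          simp only [hf] at this
          rw [dif_pos hb, dif_pos hb'] at this
          exact this
        have := hginj hxy'
        exact Fin.ext (by simpa using congrArg Fin.val this)
      · have hb' : ¬ (b' : ℕ) < t := by tauto
        by_cases hbt : (b : ℕ) = t
        · have hbt' : (b' : ℕ) = t := by tauto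
          exact Fin.ext (by omega)
        · have hbt' : ¬ (b' : ℕ) = t := by tauto
          have h2 : (b : ℕ) < t + 1 + 1 := b.isLt
          have h2' : (b' : ℕ) < t + 1 + 1 := b'.isLt
          exact Fin.ext (by omega)
  have hmain : ∀ (a : Fin 2) (b : Fin (t + 1 + 1)),
      G.Adj (f (Sum.inl a)) (f (Sum.inr b)) ↔ (Ftp t 1).Adj (Sum.inl a) (Sum.inr b) := by
    intro a b
    have hrhs : (Ftp t 1).Adj (Sum.inl a) (Sum.inr b) ↔
        ((a = 0 ∧ (b : ℕ) < t) ∨ (a = 1 ∧ t ≤ (b : ℕ) ∧ (b : ℕ) < t + 1)) := by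
      simp [Ftp, SimpleGraph.fromRel_adj]
    rw [hrhs]
    by_cases ha : a = 0
    · have hfa : f (Sum.inl a) = u0 := by simp [hf, ha]
      rw [hfa, hadj0r b, ha]
      have h01 : (0 : Fin 2) ≠ 1 := by decide
      simp [h01]
    · have hfa : f (Sum.inl a) = u1 := by simp [hf, ha]
      have ha1 : a = 1 := by
        have : (a : ℕ) = 1 := by omega
        exact Fin.ext (by rw [this]; rfl)
      rw [hfa, hadj1r b, ha1]
      have h10 : (1 : Fin 2) ≠ 0 := by decide
      simp only [h10, false_and, false_or, true_and, eq_self_iff_true]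
      omega
  have hrel : ∀ x y, G.Adj (f x) (f y) ↔ (Ftp t 1).Adj x y := by
    intro x y
    match x, y with
    | Sum.inl a, Sum.inl a' =>
      apply iff_of_false
      · intro h
        exact (hbip _ _ h) (by rw [hsidel a, hsidel a'])
      · intro h
        simp [Ftp, SimpleGraph.fromRel_adj] at h
    | Sum.inl a, Sum.inr b => exact hmain a b
    | Sum.inr b, Sum.inl a =>
      rw [G.adj_comm, (Ftp t 1).adj_comm]
      exact hmain a b
    | Sum.inr b, Sum.inr b' =>
      apply iff_of_false
      · intro h
        exact (hbip _ _ h) (by rw [hsider b, hsider b'])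
      · intro h
        simp [Ftp, SimpleGraph.fromRel_adj] at h
  refine ⟨⟨⟨f, hinj⟩, @fun x y => hrel x y⟩, ?_, ?_, ?_⟩
  · simpa [hfl0] using h0
  · simpa [hfl1] using h1
  · show side (f (Sum.inr (Fin.last (t + 1)))) = false
    exact hsider _


end S10

set_option maxHeartbeats 1000000 in
/-- Bipartite graphs (with a given bipartition `(U, W)`, encoded by `side` with
`U = side ⁻¹' {true}` and `W = side ⁻¹' {false}`) containing no one-sided induced copy
of `F_{t,1}` with its star centers in `U` (and hence its isolated vertex in `W`) admit
an implicit representation. -/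
theorem statement10 (t : ℕ) (ht : 1 ≤ t) :
    ∃ (c : ℕ) (D : ℕ → ℕ → Prop),
      ∀ n : ℕ, 2 ≤ n → ∀ (G : SimpleGraph (Fin n)) (side : Fin n → Bool),
        (∀ u v : Fin n, G.Adj u v → side u ≠ side v) →
        (¬ ∃ f : Ftp t 1 ↪g G,
          side (f (Sum.inl 0)) = true ∧ side (f (Sum.inl 1)) = true ∧
          side (f (Sum.inr (Fin.last (t + 1)))) = false) →
        ∃ ℓ : Fin n → Fin (n ^ c), Function.Injective ℓ ∧
          ∀ u v : Fin n, u ≠ v → (G.Adj u v ↔ D (ℓ u).val (ℓ v).val) := by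
  classical
  refine ⟨2 * 2 ^ (5 + 2 * t), S10.Dt t, ?_⟩
  intro n hn G side hbip hnemb
  -- the non-neighbourhoods
  set M : Fin n → Finset (Fin n) :=
    fun u => Finset.univ.filter (fun w => side w = false ∧ ¬ G.Adj u w) with hMdef
  have hM : ∀ u w, w ∈ M u ↔ (side w = false ∧ ¬ G.Adj u w) := by
    intro u w; simp [hMdef]
  set s : Finset (Fin n) := Finset.univ.filter (fun u => side u = true) with hsdef
  have hmem_s : ∀ u : Fin n, u ∈ s ↔ side u = true := by intro u; simp [hsdef]
  have hscard : s.card ≤ n := by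
    have h := Finset.card_le_univ s
    simpa using h
  -- the pairwise structure of non-neighbourhoods
  have hyp4 : ∀ i ∈ s, ∀ j ∈ s, M i ⊆ M j ∨ M j ⊆ M i ∨ M i ∩ M j = ∅ ∨
      ((M i \ M j).card < t ∧ (M j \ M i).card < t) := by
    intro i hi j hj
    by_cases h1 : M i ⊆ M j
    · exact Or.inl h1
    by_cases h2 : M j ⊆ M i
    · exact Or.inr (Or.inl h2)
    by_cases h3 : M i ∩ M j = ∅
    · exact Or.inr (Or.inr (Or.inl h3))
    have hij : i ≠ j := by rintro rfl; exact h1 subset_rfl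
    have hdij : (M i \ M j).Nonempty := by rwa [Finset.sdiff_nonempty]
    have hdji : (M j \ M i).Nonempty := by rwa [Finset.sdiff_nonempty]
    have hieq : (M i ∩ M j).Nonempty := Finset.nonempty_iff_ne_empty.mpr h3
    refine Or.inr (Or.inr (Or.inr ⟨?_, ?_⟩))
    · by_contra hge
      push_neg at hge
      exact hnemb (S10.phase1 G side hbip M hM j i ((hmem_s j).mp hj) ((hmem_s i).mp hi)
        (Ne.symm hij) hge hdji (by rwa [Finset.inter_comm] at hieq))
    · by_contra hge
      push_neg at hge
      exact hnemb (S10.phase1 G side hbip M hM i j ((hmem_s i).mp hi) ((hmem_s j).mp hj)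
        hij hge hdij hieq)
  obtain ⟨core, hcmem, hcerr, hclam⟩ := S10.lamcore t M n s hscard hyp4
  obtain ⟨pos, a, b, hposb, hintv⟩ := S10.lamint core n s Finset.univ hscard
    (fun i _ => Finset.subset_univ _) hclam
  have hucard : (Finset.univ : Finset (Fin n)).card = n := by simp
  rw [hucard] at hposb
  -- exceptions
  set E : Fin n → Finset (Fin n) := fun u => symmDiff (M u) (core u) with hEdef
  have hEcard : ∀ u ∈ s, (E u).card ≤ 2*t := hcerr
  set elist : Fin n → List ℕ :=
    fun u => ((E u).sort (· ≤ ·)).map Fin.val ++ List.replicate (2*t - (E u).card) n with helist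
  have hElen : ∀ u ∈ s, (elist u).length = 2*t := by
    intro u hu
    have h := hEcard u hu
    simp only [helist, List.length_append, List.length_map, Finset.length_sort,
      List.length_replicate]
    omega
  set tl : Fin n → List ℕ :=
    fun v => if side v = true then elist v else List.replicate (2*t) n with htl
  have htllen : ∀ v, (tl v).length = 2*t := by
    intro v
    by_cases h : side v = true
    · simp only [htl, h, if_true]
      exact hElen v ((hmem_s v).mpr h)
    · simp [htl, h]
  set fields : Fin n → List ℕ := fun v =>
    (if side v = true then 1 else 0) :: (v : ℕ) :: pos v :: (if side v = true then a v else 0) ::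
    (if side v = true then b v else 0) :: tl v with hfields
  have hflen : ∀ v, (fields v).length = 5 + 2*t := by
    intro v
    simp only [hfields, List.length_cons, htllen v]
    omega
  have hatoms : ∀ v, ∀ x ∈ fields v, x < n + 1 := by
    intro v x hx
    simp only [hfields, List.mem_cons] at hx
    rcases hx with h | h | h | h | h | h
    · subst h; split <;> omega
    · subst h; have := v.isLt; omega
    · subst h; have := hposb v (Finset.mem_univ v); omega
    · subst h
      split
      · next hside =>
        obtain ⟨h1, h2, _⟩ := hintv v ((hmem_s v).mpr hside)
        rw [hucard] at h2
        omega
      · omega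
    · subst h
      split
      · next hside =>
        obtain ⟨h1, h2, _⟩ := hintv v ((hmem_s v).mpr hside)
        rw [hucard] at h2
        omega
      · omega
    · -- tail
      simp only [htl] at h
      by_cases hside : side v = true
      · rw [if_pos hside] at h
        simp only [helist] at h
        rcases List.mem_append.mp h with h | h
        · obtain ⟨y, _, hy⟩ := List.mem_map.mp h
          rw [← hy]
          have := y.isLt
          omega
        · have := (List.mem_replicate.mp h).2
          omega
      · rw [if_neg hside] at h
        have := (List.mem_replicate.mp h).2
        omega
      
  have hbound : ∀ v, S10.encL (fields v) < n ^ (2 * 2 ^ (5 + 2*t)) := by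
    intro v
    have h1 := S10.encL_lt (m := n+1) (by omega) (fields v) (hatoms v)
    rw [hflen v] at h1
    calc S10.encL (fields v) < (n+1) ^ (2 ^ (5+2*t)) := h1
    _ ≤ (n^2) ^ (2 ^ (5+2*t)) := Nat.pow_le_pow_left (by nlinarith) _
    _ = n ^ (2 * 2 ^ (5+2*t)) := by rw [← pow_mul]
  set ℓ : Fin n → Fin (n ^ (2 * 2 ^ (5 + 2*t))) := fun v => ⟨S10.encL (fields v), hbound v⟩ with hℓ
  have hval : ∀ w : Fin n, (ℓ w : ℕ) = S10.encL (fields w) := fun w => rfl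
  -- decoding lemmas
  have hd0 : ∀ v, S10.fld 0 (S10.encL (fields v)) = (if side v = true then 1 else 0) := by
    intro v; rw [hfields]; exact S10.fld_cons_zero _ _
  have hd1 : ∀ v, S10.fld 1 (S10.encL (fields v)) = (v : ℕ) := by
    intro v; rw [hfields]
    rw [show (1:ℕ) = 0+1 from rfl, S10.fld_cons_succ, S10.fld_cons_zero]
  have hd2 : ∀ v, S10.fld 2 (S10.encL (fields v)) = pos v := by
    intro v; rw [hfields]
    rw [show (2:ℕ) = (0+1)+1 from rfl, S10.fld_cons_succ, S10.fld_cons_succ, S10.fld_cons_zero]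
  have hd3 : ∀ v, S10.fld 3 (S10.encL (fields v)) = (if side v = true then a v else 0) := by
    intro v; rw [hfields]
    rw [show (3:ℕ) = ((0+1)+1)+1 from rfl, S10.fld_cons_succ, S10.fld_cons_succ,
      S10.fld_cons_succ, S10.fld_cons_zero]
  have hd4 : ∀ v, S10.fld 4 (S10.encL (fields v)) = (if side v = true then b v else 0) := by
    intro v; rw [hfields]
    rw [show (4:ℕ) = (((0+1)+1)+1)+1 from rfl, S10.fld_cons_succ, S10.fld_cons_succ,
      S10.fld_cons_succ, S10.fld_cons_succ, S10.fld_cons_zero]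
  have hdE : ∀ v k, S10.fld (5+k) (S10.encL (fields v)) = S10.fld k (S10.encL (tl v)) := by
    intro v k; rw [hfields]; exact S10.fld_shift _ _ _ _ _ _ _
  -- injectivity
  have hinj : Function.Injective ℓ := by
    intro u v h
    have hv : S10.encL (fields u) = S10.encL (fields v) := by
      have := congrArg Fin.val h
      rwa [hval, hval] at this
    have h1 := congrArg (S10.fld 1) hv
    rw [hd1 u, hd1 v] at h1
    exact Fin.ext h1
  refine ⟨ℓ, hinj, ?_⟩
  -- the cross adjacency decoding
  have hcross : ∀ u v : Fin n, side u = true → side v = false →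
      (G.Adj u v ↔ S10.Dt t (ℓ u).val (ℓ v).val) := by
    intro u v hsu hsv
    have hu_s : u ∈ s := (hmem_s u).mpr hsu
    obtain ⟨hab, hbn, hcoreq⟩ := hintv u hu_s
    have hcoreMem : v ∈ core u ↔ (a u ≤ pos v ∧ pos v < b u) := by
      conv_lhs => rw [hcoreq]
      simp [Finset.mem_filter]
    have hAdjIff : G.Adj u v ↔ v ∉ M u := by
      constructor
      · intro h hmem
        exact ((hM u v).mp hmem).2 h
      · intro h
        by_contra h'
        exact h ((hM u v).mpr ⟨hsv, h'⟩)
    have hMeq : M u = symmDiff (core u) (E u) := by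
      rw [hEdef]
      show M u = symmDiff (core u) (symmDiff (M u) (core u))
      rw [symmDiff_comm (M u) (core u), symmDiff_symmDiff_cancel_left]
    have etl : tl u = elist u := by
      simp only [htl]
      rw [if_pos hsu]
    have hmemE : ((v : ℕ) ∈ elist u ↔ v ∈ E u) := by
      simp only [helist]
      simp only [List.mem_append, List.mem_map, List.mem_replicate]
      constructor
      · rintro (⟨y, hy, hyv⟩ | ⟨_, hrep⟩)
        · have : y = v := Fin.ext hyv
          subst this
          exact (Finset.mem_sort _).mp hy
        · exfalso
          have := v.isLt
          omega
      · intro hmem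
        exact Or.inl ⟨v, (Finset.mem_sort _).mpr hmem, rfl⟩
    have hEex : (∃ k, k < 2*t ∧ S10.fld (5+k) (S10.encL (fields u)) = (v : ℕ)) ↔ v ∈ E u := by
      rw [← hmemE]
      rw [← S10.mem_encL_list (elist u) (v : ℕ)]
      rw [hElen u hu_s]
      constructor
      · rintro ⟨k, hk, hfld⟩
        refine ⟨k, hk, ?_⟩
        rw [hdE u k, etl] at hfld
        exact hfld
      · rintro ⟨k, hk, hfld⟩
        refine ⟨k, hk, ?_⟩
        rw [hdE u k, etl]
        exact hfld
    have hDu : S10.Dt t (ℓ u).val (ℓ v).val ↔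
        ((a u ≤ pos v ∧ pos v < b u) ↔ v ∈ E u) := by
      have e3 : (if side u = true then a u else 0) = a u := if_pos hsu
      have e4 : (if side u = true then b u else 0) = b u := if_pos hsu
      have e0u : (if side u = true then (1:ℕ) else 0) = 1 := if_pos hsu
      have e0v : (if side v = true then (1:ℕ) else 0) = 0 := by
        rw [hsv]; simp
      unfold S10.Dt
      rw [hval u, hval v, hd0 u, hd0 v, hd1 v, hd2 v, hd3 u, hd4 u, e3, e4, e0u, e0v]
      constructor
      · rintro (⟨_, _, h⟩ | ⟨h, _, _⟩)
        · rw [← hEex]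
          exact h
        · exact absurd h one_ne_zero
      · intro h
        refine Or.inl ⟨rfl, rfl, ?_⟩
        rw [hEex]
        exact h
    rw [hAdjIff, hDu, hMeq, Finset.mem_symmDiff, ← hcoreMem]
    constructor
    · intro h
      constructor
      · intro hP
        by_contra hQ
        exact h (Or.inl ⟨hP, hQ⟩)
      · intro hQ
        by_contra hP
        exact h (Or.inr ⟨hQ, hP⟩)
    · rintro hiff (⟨hP, hQ⟩ | ⟨hQ, hP⟩)
      · exact hQ (hiff.mp hP)
      · exact hP (hiff.mpr hQ)
  -- now the main claim
  intro u v huv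
  by_cases hsu : side u = true <;> by_cases hsv : side v = true
  · -- both true
    apply iff_of_false
    · intro h
      exact (hbip u v h) (by rw [hsu, hsv])
    · rintro (⟨h1, h2, _⟩ | ⟨h1, h2, _⟩)
      · rw [hval v, hd0 v, if_pos hsv] at h2
        exact one_ne_zero h2
      · rw [hval u, hd0 u, if_pos hsu] at h1
        exact one_ne_zero h1
  · -- u true, v false
    exact hcross u v hsu (by simpa using hsv)
  · -- u false, v true
    rw [G.adj_comm, S10.Dt_symm]
    exact hcross v u hsv (by simpa using hsu)
  · -- both false
    apply iff_of_false
    · intro h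
      have h1 : side u = false := by simpa using hsu
      have h2 : side v = false := by simpa using hsv
      exact (hbip u v h) (by rw [h1, h2])
    · rintro (⟨h1, h2, _⟩ | ⟨h1, h2, _⟩)
      · rw [hval u, hd0 u, if_neg hsu] at h1
        exact one_ne_zero h1.symm
      · rw [hval v, hd0 v, if_neg hsv] at h2
        exact one_ne_zero h2.symm
end

section
/- For every n ≥ 1, the number of simple graphs on the labeled vertex set {1, …, n} that are isomorphic to an induced subgraph of a hypercube Q_m for some m ≥ 1 is at most n^(2n). -/
open SimpleGraph

/-- The hypercube `Q_m`: vertices are `{0,1}^m`, two vertices adjacent iff they differ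
in exactly one coordinate. -/
def hypercube (m : ℕ) : SimpleGraph (Fin m → Bool) :=
  SimpleGraph.fromRel fun u v => ∃! i : Fin m, u i ≠ v i

namespace Stmt14

open Finset

variable {n m : ℕ}

def hgo (p c : Fin n → Fin n) : ℕ → Fin n → Fin n → Bool
  | 0, _, _ => false
  | (fuel+1), v, j =>
      if p v = v then false else xor (decide (j = c v)) (hgo p c fuel (p v) j)

def forest (p : Fin n → Fin n) : SimpleGraph (Fin n) :=
  SimpleGraph.fromRel (fun a b => p a = b)

def decode (p c : Fin n → Fin n) : SimpleGraph (Fin n) where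
  Adj v w := v ≠ w ∧ (forest p).Reachable v w ∧
    (univ.filter (fun j => hgo p c n v j ≠ hgo p c n w j)).card = 1
  symm := ⟨by
    rintro v w ⟨h1, h2, h3⟩
    refine ⟨h1.symm, h2.symm, ?_⟩
    have : (univ.filter (fun j => hgo p c n w j ≠ hgo p c n v j)) =
           (univ.filter (fun j => hgo p c n v j ≠ hgo p c n w j)) :=
      Finset.filter_congr (fun j _ => by rw [ne_comm])
    rw [this]; exact h3⟩
  loopless := ⟨fun v h => h.1 rfl⟩

section Encode

open scoped Classical

variable (G : SimpleGraph (Fin n))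

noncomputable def root (v : Fin n) : Fin n :=
  ((univ : Finset (Fin n)).filter (fun u => G.Reachable v u)).min'
    ⟨v, Finset.mem_filter.mpr ⟨Finset.mem_univ v, SimpleGraph.Reachable.refl v⟩⟩

lemma reachable_root (v : Fin n) : G.Reachable v (root G v) := by
  have h := Finset.min'_mem ((univ : Finset (Fin n)).filter (fun u => G.Reachable v u))
    ⟨v, Finset.mem_filter.mpr ⟨Finset.mem_univ v, SimpleGraph.Reachable.refl v⟩⟩
  rw [Finset.mem_filter] at h
  exact h.2

lemma root_congr {v w : Fin n} (h : G.Reachable v w) : root G v = root G w := by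
  have hs : ((univ : Finset (Fin n)).filter (fun u => G.Reachable v u)) =
      ((univ : Finset (Fin n)).filter (fun u => G.Reachable w u)) :=
    Finset.filter_congr (fun u _ => ⟨fun hv => h.symm.trans hv, fun hw => h.trans hw⟩)
  unfold root
  congr 1

lemma exists_parent {v : Fin n} (h : v ≠ root G v) :
    ∃ u, G.Adj v u ∧ G.dist u (root G v) + 1 = G.dist v (root G v) := by
  have hr := reachable_root G v
  have hd : G.dist v (root G v) ≠ 0 := by
    simp only [ne_eq, hr.dist_eq_zero_iff]; exact h
  obtain ⟨p, hp⟩ := hr.exists_walk_length_eq_dist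
  obtain ⟨u, hadj, q, rfl⟩ := SimpleGraph.Walk.exists_eq_cons_of_ne h p
  refine ⟨u, hadj, ?_⟩
  have h1 : G.dist u (root G v) ≤ q.length := SimpleGraph.dist_le q
  have h2 : G.dist v (root G v) ≤ G.dist u (root G v) + 1 := by
    obtain ⟨q', hq'⟩ := SimpleGraph.Reachable.exists_walk_length_eq_dist (⟨q⟩ : G.Reachable u (root G v))
    have := SimpleGraph.dist_le (SimpleGraph.Walk.cons hadj q')
    simpa [hq'] using this
  have h3 : q.length + 1 = G.dist v (root G v) := by
    simpa using hp
  omega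

noncomputable def parent (v : Fin n) : Fin n :=
  if h : v = root G v then v else Classical.choose (exists_parent G h)

lemma parent_root {v : Fin n} (h : v = root G v) : parent G v = v := by
  rw [parent, dif_pos h]

lemma parent_adj {v : Fin n} (h : v ≠ root G v) : G.Adj v (parent G v) := by
  rw [parent, dif_neg h]
  exact (Classical.choose_spec (exists_parent G h)).1

lemma parent_dist {v : Fin n} (h : v ≠ root G v) :
    G.dist (parent G v) (root G v) + 1 = G.dist v (root G v) := by
  rw [parent, dif_neg h]
  exact (Classical.choose_spec (exists_parent G h)).2

lemma root_parent {v : Fin n} (h : v ≠ root G v) : root G (parent G v) = root G v :=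
  (root_congr G (parent_adj G h).reachable).symm

lemma parent_ne {v : Fin n} (h : v ≠ root G v) : parent G v ≠ v :=
  fun he => (G.irrefl (he ▸ parent_adj G h))

lemma parent_eq_self_iff (v : Fin n) : parent G v = v ↔ v = root G v := by
  constructor
  · intro he
    by_contra h
    exact parent_ne G h he
  · exact parent_root G

lemma dist_root_le (v : Fin n) : G.dist v (root G v) ≤ n := by
  obtain ⟨p, hp⟩ := (reachable_root G v).exists_walk_length_eq_dist
  have h1 : G.dist v (root G v) ≤ p.toPath.1.length := SimpleGraph.dist_le _
  have h2 : p.toPath.1.length < Fintype.card (Fin n) := p.toPath.2.length_lt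
  simp only [Fintype.card_fin] at h2
  omega

end Encode

section Embed

variable {G : SimpleGraph (Fin n)} (F : G ↪g hypercube m)

lemma hypercube_adj_iff {u v : Fin m → Bool} :
    (hypercube m).Adj u v ↔ ∃! i, u i ≠ v i := by
  rw [hypercube, SimpleGraph.fromRel_adj]
  constructor
  · rintro ⟨hne, h | h⟩
    · exact h
    · obtain ⟨i, hi, hu⟩ := h
      exact ⟨i, Ne.symm hi, fun j hj => hu j (Ne.symm hj)⟩
  · intro h
    refine ⟨?_, Or.inl h⟩
    obtain ⟨i, hi, -⟩ := h
    intro he; exact hi (by rw [he])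

lemma adj_iff (v w : Fin n) : G.Adj v w ↔ ∃! i, F v i ≠ F w i := by
  rw [← F.map_adj_iff, hypercube_adj_iff]

noncomputable def kcoord (hm : 0 < m) (v : Fin n) : Fin m :=
  if h : v = root G v then ⟨0, hm⟩
  else Classical.choose ((adj_iff F v (parent G v)).mp (parent_adj G h))

lemma kcoord_spec (hm : 0 < m) {v : Fin n} (h : v ≠ root G v) :
    (F v (kcoord F hm v) ≠ F (parent G v) (kcoord F hm v)) ∧
    ∀ i, F v i ≠ F (parent G v) i → i = kcoord F hm v := by
  rw [kcoord, dif_neg h]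
  exact Classical.choose_spec ((adj_iff F v (parent G v)).mp (parent_adj G h))

noncomputable def Kset (hm : 0 < m) : Finset (Fin m) :=
  (univ.filter (fun v => v ≠ root G v)).image (kcoord F hm)

lemma Kset_card (hm : 0 < m) : (Kset F hm).card ≤ n :=
  le_trans Finset.card_image_le (le_trans (Finset.card_filter_le _ _) (by simp))

lemma kcoord_mem (hm : 0 < m) {v : Fin n} (h : v ≠ root G v) :
    kcoord F hm v ∈ Kset F hm :=
  Finset.mem_image.mpr ⟨v, by simp [h], rfl⟩

noncomputable def iota (hm : 0 < m) (hn : 0 < n) : Fin m → Fin n :=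
  fun i => if h : i ∈ Kset F hm then
    Fin.castLE (Kset_card F hm) ((Kset F hm).equivFin ⟨i, h⟩) else ⟨0, hn⟩

lemma iota_injOn (hm : 0 < m) (hn : 0 < n) {i j : Fin m}
    (hi : i ∈ Kset F hm) (hj : j ∈ Kset F hm)
    (hij : iota F hm hn i = iota F hm hn j) : i = j := by
  simp only [iota] at hij
  rw [dif_pos hi, dif_pos hj] at hij
  have h1 := Fin.castLE_injective (Kset_card F hm) hij
  have h2 := (Kset F hm).equivFin.injective h1
  simpa using congrArg Subtype.val h2

noncomputable def cfun (hm : 0 < m) (hn : 0 < n) : Fin n → Fin n :=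
  fun u => iota F hm hn (kcoord F hm u)

lemma support_lemma (hm : 0 < m) :
    ∀ N v i, G.dist v (root G v) ≤ N → i ∉ Kset F hm → F v i = F (root G v) i := by
  intro N
  induction N with
  | zero =>
    intro v i h0 _
    have hv : v = root G v := (reachable_root G v).dist_eq_zero_iff.mp (Nat.le_zero.mp h0)
    rw [← hv]
  | succ N ih =>
    intro v i hd hK
    by_cases h : v = root G v
    · rw [← h]
    · have h1 : F v i = F (parent G v) i := by
        by_contra hne
        have : i = kcoord F hm v := (kcoord_spec F hm h).2 i hne
        exact hK (this ▸ kcoord_mem F hm h)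
      have hdp : G.dist (parent G v) (root G (parent G v)) ≤ N := by
        have := parent_dist G h
        rw [root_parent G h]
        omega
      have h2 := ih (parent G v) i hdp hK
      rw [h1, h2, root_parent G h]

lemma xor_iff : ∀ a b : Bool, (xor a b = true ↔ ((a = true) ↔ ¬ (b = true))) := by decide

lemma bhelp1 : ∀ a b r : Bool, a ≠ b → ((a ≠ r) ↔ ¬(b ≠ r)) := by decide

lemma bhelp2 : ∀ a b r : Bool, ((a ≠ r) ↔ (b ≠ r)) → a = b := by decide

lemma bhelp3 : ∀ a b r : Bool, (((a ≠ b) ↔ ¬(b ≠ r)) ↔ (a ≠ r)) := by decide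

lemma hgo_eq_false {p c : Fin n → Fin n} {v : Fin n} (h : p v = v) (fuel j) :
    hgo p c fuel v j = false := by
  cases fuel with
  | zero => rfl
  | succ f => simp [hgo, h]

lemma hgo_spec (hm : 0 < m) (hn : 0 < n) :
    ∀ N fuel v j, G.dist v (root G v) ≤ N → N ≤ fuel →
    (hgo (parent G) (cfun F hm hn) fuel v j = true ↔
      ∃ i ∈ Kset F hm, iota F hm hn i = j ∧ F v i ≠ F (root G v) i) := by
  intro N
  induction N with
  | zero =>
    intro fuel v j h0 _
    have hv : v = root G v := (reachable_root G v).dist_eq_zero_iff.mp (Nat.le_zero.mp h0)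
    rw [hgo_eq_false (parent_root G hv) fuel j]
    simp only [← hv]
    simp
  | succ N ih =>
    intro fuel v j hd hfuel
    by_cases h : v = root G v
    · rw [hgo_eq_false (parent_root G h) fuel j]
      simp only [← h]
      simp
    · obtain ⟨f, rfl⟩ : ∃ f, fuel = f + 1 := ⟨fuel - 1, by omega⟩
      have hpne : ¬ (parent G v = v) := fun he => h ((parent_eq_self_iff G v).mp he)
      have hstep : hgo (parent G) (cfun F hm hn) (f+1) v j =
          xor (decide (j = cfun F hm hn v)) (hgo (parent G) (cfun F hm hn) f (parent G v) j) := by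
        simp only [hgo, if_neg hpne]
      have hdp : G.dist (parent G v) (root G (parent G v)) ≤ N := by
        have := parent_dist G h
        rw [root_parent G h]
        omega
      have hB := ih f (parent G v) j hdp (by omega)
      rw [root_parent G h] at hB
      have hkv : kcoord F hm v ∈ Kset F hm := kcoord_mem F hm h
      have hspec := kcoord_spec F hm h
      rw [hstep, xor_iff]
      by_cases hj : ∃ i ∈ Kset F hm, iota F hm hn i = j
      · obtain ⟨i₀, hi₀K, hi₀j⟩ := hj
        have hRv : (∃ i ∈ Kset F hm, iota F hm hn i = j ∧ F v i ≠ F (root G v) i) ↔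
            (F v i₀ ≠ F (root G v) i₀) := by
          constructor
          · rintro ⟨i, hiK, hij, hne⟩
            have : i = i₀ := iota_injOn F hm hn hiK hi₀K (by rw [hij, hi₀j])
            rwa [← this]
          · intro hne
            exact ⟨i₀, hi₀K, hi₀j, hne⟩
        have hBv : (hgo (parent G) (cfun F hm hn) f (parent G v) j = true) ↔
            (F (parent G v) i₀ ≠ F (root G v) i₀) := by
          rw [hB]
          constructor
          · rintro ⟨i, hiK, hij, hne⟩
            have : i = i₀ := iota_injOn F hm hn hiK hi₀K (by rw [hij, hi₀j])
            rwa [← this]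
          · intro hne
            exact ⟨i₀, hi₀K, hi₀j, hne⟩
        have hAv : (decide (j = cfun F hm hn v) = true) ↔ (F v i₀ ≠ F (parent G v) i₀) := by
          rw [decide_eq_true_iff]
          constructor
          · intro hjc
            have : kcoord F hm v = i₀ := by
              apply iota_injOn F hm hn hkv hi₀K
              rw [hi₀j, hjc]; rfl
            rw [← this]; exact hspec.1
          · intro hne
            have : i₀ = kcoord F hm v := hspec.2 i₀ hne
            rw [cfun, ← this, hi₀j]
        rw [hAv, hBv, hRv]
        exact bhelp3 _ _ _
      · push_neg at hj
        have hA : ¬ (decide (j = cfun F hm hn v) = true) := by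
          rw [decide_eq_true_iff]
          intro hjc
          exact hj (kcoord F hm v) hkv (by rw [hjc]; rfl)
        have hBf : ¬ (hgo (parent G) (cfun F hm hn) f (parent G v) j = true) := by
          rw [hB]
          rintro ⟨i, hiK, hij, -⟩
          exact hj i hiK hij
        have hRf : ¬ (∃ i ∈ Kset F hm, iota F hm hn i = j ∧ F v i ≠ F (root G v) i) := by
          rintro ⟨i, hiK, hij, -⟩
          exact hj i hiK hij
        constructor
        · intro hcontr
          exact absurd (hcontr.mpr hBf) hA
        · intro hr
          exact absurd hr hRf

end Embed

section Main

variable {G : SimpleGraph (Fin n)} (F : G ↪g hypercube m)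

lemma card_eq (hm : 0 < m) (hn : 0 < n) {v w : Fin n} (hr : G.Reachable v w) :
    (univ.filter (fun j => hgo (parent G) (cfun F hm hn) n v j ≠
        hgo (parent G) (cfun F hm hn) n w j)).card
      = (univ.filter (fun i => F v i ≠ F w i)).card := by
  have hroot : root G w = root G v := (root_congr G hr).symm
  have Hv : ∀ j, (hgo (parent G) (cfun F hm hn) n v j = true ↔
      ∃ i ∈ Kset F hm, iota F hm hn i = j ∧ F v i ≠ F (root G v) i) :=
    fun j => hgo_spec F hm hn _ n v j le_rfl (dist_root_le G v)
  have Hw : ∀ j, (hgo (parent G) (cfun F hm hn) n w j = true ↔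
      ∃ i ∈ Kset F hm, iota F hm hn i = j ∧ F w i ≠ F (root G v) i) := by
    intro j
    have := hgo_spec F hm hn _ n w j le_rfl (dist_root_le G w)
    rwa [hroot] at this
  have hsub : ∀ i, F v i ≠ F w i → i ∈ Kset F hm := by
    intro i hi
    by_contra hK
    have h1 := support_lemma F hm _ v i le_rfl hK
    have h2 := support_lemma F hm _ w i le_rfl hK
    rw [hroot] at h2
    exact hi (h1.trans h2.symm)
  symm
  apply Finset.card_bij (fun i _ => iota F hm hn i)
  · intro i hi
    rw [Finset.mem_filter] at hi
    have hiK := hsub i hi.2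
    have hv1 : hgo (parent G) (cfun F hm hn) n v (iota F hm hn i) = true ↔
        F v i ≠ F (root G v) i := by
      rw [Hv]
      constructor
      · rintro ⟨i', hi'K, hi'j, hne⟩
        have : i' = i := iota_injOn F hm hn hi'K hiK hi'j
        rwa [← this]
      · intro hne; exact ⟨i, hiK, rfl, hne⟩
    have hw1 : hgo (parent G) (cfun F hm hn) n w (iota F hm hn i) = true ↔
        F w i ≠ F (root G v) i := by
      rw [Hw]
      constructor
      · rintro ⟨i', hi'K, hi'j, hne⟩
        have : i' = i := iota_injOn F hm hn hi'K hiK hi'j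
        rwa [← this]
      · intro hne; exact ⟨i, hiK, rfl, hne⟩
    rw [Finset.mem_filter]
    refine ⟨Finset.mem_univ _, ?_⟩
    intro heq
    have : (F v i ≠ F (root G v) i) ↔ (F w i ≠ F (root G v) i) := by
      rw [← hv1, ← hw1, heq]
    exact hi.2 (bhelp2 _ _ _ this)
  · intro i hi i' hi' hii'
    rw [Finset.mem_filter] at hi hi'
    exact iota_injOn F hm hn (hsub i hi.2) (hsub i' hi'.2) hii'
  · intro j hj
    rw [Finset.mem_filter] at hj
    have hne := hj.2
    have hex : ∃ i ∈ Kset F hm, iota F hm hn i = j := by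
      rcases Bool.eq_false_or_eq_true (hgo (parent G) (cfun F hm hn) n v j) with h1 | h1
      · obtain ⟨i, hiK, hij, -⟩ := (Hv j).mp h1
        exact ⟨i, hiK, hij⟩
      · have h2 : hgo (parent G) (cfun F hm hn) n w j = true := by
          cases h2 : hgo (parent G) (cfun F hm hn) n w j
          · exact absurd (h1.trans h2.symm) hne
          · rfl
        obtain ⟨i, hiK, hij, -⟩ := (Hw j).mp h2
        exact ⟨i, hiK, hij⟩
    obtain ⟨i, hiK, hij⟩ := hex
    have hv1 : hgo (parent G) (cfun F hm hn) n v j = true ↔ F v i ≠ F (root G v) i := by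
      rw [Hv]
      constructor
      · rintro ⟨i', hi'K, hi'j, hne'⟩
        have : i' = i := iota_injOn F hm hn hi'K hiK (by rw [hi'j, hij])
        rwa [← this]
      · intro hne'; exact ⟨i, hiK, hij, hne'⟩
    have hw1 : hgo (parent G) (cfun F hm hn) n w j = true ↔ F w i ≠ F (root G v) i := by
      rw [Hw]
      constructor
      · rintro ⟨i', hi'K, hi'j, hne'⟩
        have : i' = i := iota_injOn F hm hn hi'K hiK (by rw [hi'j, hij])
        rwa [← this]
      · intro hne'; exact ⟨i, hiK, hij, hne'⟩
    refine ⟨i, Finset.mem_filter.mpr ⟨Finset.mem_univ _, ?_⟩, hij⟩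
    intro hFeq
    apply hne
    rw [Bool.eq_iff_iff, hv1, hw1, hFeq]

lemma forest_le : forest (parent G) ≤ G := by
  intro a b hab
  rw [forest, SimpleGraph.fromRel_adj] at hab
  obtain ⟨hne, h | h⟩ := hab
  · have ha : a ≠ root G a := fun hr => hne (by rw [← h, parent_root G hr])
    exact h ▸ parent_adj G ha
  · have hb : b ≠ root G b := fun hr => hne (by rw [← h, parent_root G hr])
    exact (h ▸ parent_adj G hb).symm

lemma forest_reach_root :
    ∀ N v, G.dist v (root G v) ≤ N → (forest (parent G)).Reachable v (root G v) := by
  intro N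
  induction N with
  | zero =>
    intro v h0
    have hv : v = root G v := (reachable_root G v).dist_eq_zero_iff.mp (Nat.le_zero.mp h0)
    rw [← hv]
  | succ N ih =>
    intro v hd
    by_cases h : v = root G v
    · rw [← h]
    · have hadj : (forest (parent G)).Adj v (parent G v) := by
        rw [forest, SimpleGraph.fromRel_adj]
        exact ⟨(parent_ne G h).symm, Or.inl rfl⟩
      have hdp : G.dist (parent G v) (root G (parent G v)) ≤ N := by
        have := parent_dist G h
        rw [root_parent G h]
        omega
      have := ih (parent G v) hdp
      rw [root_parent G h] at this
      exact hadj.reachable.trans this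

lemma decode_eq (hm : 0 < m) (hn : 0 < n) : decode (parent G) (cfun F hm hn) = G := by
  ext v w
  show (v ≠ w ∧ (forest (parent G)).Reachable v w ∧ _) ↔ _
  constructor
  · rintro ⟨hne, hreach, hcard⟩
    have hGreach : G.Reachable v w := hreach.mono forest_le
    rw [card_eq F hm hn hGreach] at hcard
    obtain ⟨i, hi⟩ := Finset.card_eq_one.mp hcard
    rw [adj_iff F]
    refine ⟨i, ?_, ?_⟩
    · have : i ∈ Finset.filter (fun i => F v i ≠ F w i) univ := hi ▸ Finset.mem_singleton_self i
      exact (Finset.mem_filter.mp this).2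
    · intro j hj
      have : j ∈ Finset.filter (fun i => F v i ≠ F w i) univ :=
        Finset.mem_filter.mpr ⟨Finset.mem_univ _, hj⟩
      rw [hi, Finset.mem_singleton] at this
      exact this
  · intro hAdj
    refine ⟨hAdj.ne, ?_, ?_⟩
    · have h1 := forest_reach_root (G := G) _ v (le_refl (G.dist v (root G v)))
      have h2 := forest_reach_root (G := G) _ w (le_refl (G.dist w (root G w)))
      rw [root_congr G hAdj.reachable] at h1
      exact h1.trans h2.symm
    · rw [card_eq F hm hn hAdj.reachable]
      obtain ⟨i, hi, huniq⟩ := (adj_iff F v w).mp hAdj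
      rw [Finset.card_eq_one]
      refine ⟨i, ?_⟩
      rw [Finset.eq_singleton_iff_unique_mem]
      exact ⟨Finset.mem_filter.mpr ⟨Finset.mem_univ _, hi⟩,
        fun j hj => huniq j (Finset.mem_filter.mp hj).2⟩

end Main

end Stmt14

/-- For every `n ≥ 1`, the number of labelled graphs on `{1, …, n}` that are isomorphic
to an induced subgraph of some hypercube `Q_m` is at most `n^(2n)`. -/
theorem statement14 (n : ℕ) (hn : 1 ≤ n) :
    Nat.card {G : SimpleGraph (Fin n) // ∃ m : ℕ, 1 ≤ m ∧ Nonempty (G ↪g hypercube m)}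
      ≤ n ^ (2 * n) := by
  classical
  have key : ∀ Gp : {G : SimpleGraph (Fin n) // ∃ m : ℕ, 1 ≤ m ∧ Nonempty (G ↪g hypercube m)},
      ∃ pc : (Fin n → Fin n) × (Fin n → Fin n), Stmt14.decode pc.1 pc.2 = Gp.val := by
    rintro ⟨G, m, hm, ⟨F⟩⟩
    exact ⟨(Stmt14.parent G, Stmt14.cfun F hm hn), Stmt14.decode_eq F hm hn⟩
  choose enc henc using key
  have hinj : Function.Injective enc := by
    intro a b hab
    apply Subtype.ext
    rw [← henc a, ← henc b, hab]
  calc Nat.card {G : SimpleGraph (Fin n) // ∃ m : ℕ, 1 ≤ m ∧ Nonempty (G ↪g hypercube m)}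
      ≤ Nat.card ((Fin n → Fin n) × (Fin n → Fin n)) :=
        Nat.card_le_card_of_injective enc hinj
    _ = n ^ (2 * n) := by
        simp [Nat.card_eq_fintype_card, Fintype.card_prod, Fintype.card_fun, two_mul, pow_add]
end

section
/- Let 𝒳 be a hereditary class of finite simple graphs in which the h-index is unbounded, i.e., for every k there is a graph G ∈ 𝒳 with h(G) ≥ k. Then 𝒳 contains every complete graph Kₙ, or 𝒳 contains every complete bipartite graph K_{n,n}, or 𝒳 contains every star forest nK_{1,n} (the disjoint union of n copies of the star K_{1,n}). Conversely, the class of complete graphs, the class of complete bipartite graphs, and the class of star forests each have unbounded h-index; hence these are the only three minimal hereditary classes of graphs of unbounded h-index. -/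
open SimpleGraph

/-- A class of finite simple graphs, given by its members on the concrete
vertex sets `Fin n`. -/
abbrev GraphClass : Type := ∀ n : ℕ, SimpleGraph (Fin n) → Prop

/-- A class is hereditary if it is closed under induced subgraphs
(and hence under isomorphism). -/
def Hereditary (C : GraphClass) : Prop :=
  ∀ {n m : ℕ} (G : SimpleGraph (Fin n)) (H : SimpleGraph (Fin m)),
    C n G → Nonempty (H ↪g G) → C m H

/-- The star forest `nK_{1,n}`: `n` disjoint stars `K_{1,n}`, the `i`-th star having
center `(i, 0)` and leaves `(i, j)` for `j ≠ 0`. -/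
def starForest (n : ℕ) : SimpleGraph (Fin n × Fin (n + 1)) :=
  SimpleGraph.fromRel fun a b => a.1 = b.1 ∧ a.2 = 0 ∧ b.2 ≠ 0

/-- `G` has h-index at least `k`: it has at least `k` vertices of degree at least `k`. -/
def HIndexAtLeast {V : Type*} (G : SimpleGraph V) (k : ℕ) : Prop :=
  k ≤ {v : V | k ≤ (G.neighborSet v).ncard}.ncard



def IsCliqueF {V : Type} (G : SimpleGraph V) (s : Finset V) : Prop :=
  ∀ x ∈ s, ∀ y ∈ s, x ≠ y → G.Adj x y

def IsIndepF {V : Type} (G : SimpleGraph V) (s : Finset V) : Prop :=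
  ∀ x ∈ s, ∀ y ∈ s, ¬ G.Adj x y

lemma myRamseyAux : ∀ (N s t : ℕ), s + t ≤ N →
    ∃ R : ℕ, ∀ {V : Type} [DecidableEq V] (G : SimpleGraph V) (A : Finset V), R ≤ A.card →
      (∃ B ⊆ A, s ≤ B.card ∧ IsCliqueF G B) ∨ (∃ B ⊆ A, t ≤ B.card ∧ IsIndepF G B) := by
  intro N
  induction N with
  | zero =>
    intro s t hst
    refine ⟨0, fun G A _ => ?_⟩
    exact Or.inl ⟨∅, by simp, by omega, by intro x hx; simp at hx⟩
  | succ N ih =>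
    intro s t hst
    match s, t with
    | 0, t =>
      refine ⟨0, fun G A _ => Or.inl ⟨∅, by simp, by omega, ?_⟩⟩
      intro x hx; simp at hx
    | s, 0 =>
      refine ⟨0, fun G A _ => Or.inr ⟨∅, by simp, by omega, ?_⟩⟩
      intro x hx; simp at hx
    | s + 1, t + 1 =>
      obtain ⟨R₁, h₁⟩ := ih s (t + 1) (by omega)
      obtain ⟨R₂, h₂⟩ := ih (s + 1) t (by omega)
      refine ⟨R₁ + R₂ + 1, fun {V} _ G A hA => ?_⟩
      classical
      have hne : A.Nonempty := Finset.card_pos.mp (by omega)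
      obtain ⟨v, hv⟩ := hne
      set A' := A.erase v with hA'
      have hcard : A'.card = A.card - 1 := Finset.card_erase_of_mem hv
      set Nv := A'.filter (fun x => G.Adj v x) with hNv
      set Mv := A'.filter (fun x => ¬ G.Adj v x) with hMv
      have hsum : Nv.card + Mv.card = A'.card := Finset.card_filter_add_card_filter_not _
      have hcases : R₁ ≤ Nv.card ∨ R₂ ≤ Mv.card := by omega
      rcases hcases with hc | hc
      · rcases h₁ G Nv hc with ⟨B, hBsub, hBcard, hBcl⟩ | ⟨B, hBsub, hBcard, hBind⟩
        · have hvB : v ∉ B := fun h => (Finset.notMem_erase v A)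
            (Finset.mem_of_mem_filter v (hBsub h))
          refine Or.inl ⟨insert v B, ?_, ?_, ?_⟩
          · intro x hx
            rcases Finset.mem_insert.mp hx with rfl | hx
            · exact hv
            · exact Finset.mem_of_mem_erase (Finset.mem_of_mem_filter x (hBsub hx))
          · rw [Finset.card_insert_of_notMem hvB]; omega
          · intro x hx y hy hxy
            by_cases hxv : x = v <;> by_cases hyv : y = v
            · exact absurd (hxv.trans hyv.symm) hxy
            · have hy' : y ∈ B := (Finset.mem_insert.mp hy).resolve_left hyv
              rw [hxv]
              exact (Finset.mem_filter.mp (hBsub hy')).2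
            · have hx' : x ∈ B := (Finset.mem_insert.mp hx).resolve_left hxv
              rw [hyv]
              exact ((Finset.mem_filter.mp (hBsub hx')).2).symm
            · exact hBcl x ((Finset.mem_insert.mp hx).resolve_left hxv) y
                ((Finset.mem_insert.mp hy).resolve_left hyv) hxy
        · refine Or.inr ⟨B, ?_, hBcard, hBind⟩
          intro x hx; exact Finset.mem_of_mem_erase (Finset.mem_of_mem_filter x (hBsub hx))
      · rcases h₂ G Mv hc with ⟨B, hBsub, hBcard, hBcl⟩ | ⟨B, hBsub, hBcard, hBind⟩
        · refine Or.inl ⟨B, ?_, hBcard, hBcl⟩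
          intro x hx; exact Finset.mem_of_mem_erase (Finset.mem_of_mem_filter x (hBsub hx))
        · have hvB : v ∉ B := fun h => (Finset.notMem_erase v A)
            (Finset.mem_of_mem_filter v (hBsub h))
          refine Or.inr ⟨insert v B, ?_, ?_, ?_⟩
          · intro x hx
            rcases Finset.mem_insert.mp hx with rfl | hx
            · exact hv
            · exact Finset.mem_of_mem_erase (Finset.mem_of_mem_filter x (hBsub hx))
          · rw [Finset.card_insert_of_notMem hvB]; omega
          · intro x hx y hy
            by_cases hxv : x = v <;> by_cases hyv : y = v
            · rw [hxv, hyv]; exact G.loopless.irrefl v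
            · have hy' : y ∈ B := (Finset.mem_insert.mp hy).resolve_left hyv
              rw [hxv]
              exact (Finset.mem_filter.mp (hBsub hy')).2
            · have hx' : x ∈ B := (Finset.mem_insert.mp hx).resolve_left hxv
              rw [hyv]
              exact fun h => (Finset.mem_filter.mp (hBsub hx')).2 h.symm
            · exact hBind x ((Finset.mem_insert.mp hx).resolve_left hxv) y
                ((Finset.mem_insert.mp hy).resolve_left hyv)

lemma myRamsey (s t : ℕ) :
    ∃ R : ℕ, ∀ {V : Type} [DecidableEq V] (G : SimpleGraph V) (A : Finset V), R ≤ A.card →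
      (∃ B ⊆ A, s ≤ B.card ∧ IsCliqueF G B) ∨ (∃ B ⊆ A, t ≤ B.card ∧ IsIndepF G B) :=
  myRamseyAux (s + t) s t le_rfl


lemma bipRamAux : ∀ (k b : ℕ), ∃ R : ℕ,
    ∀ {V : Type} [DecidableEq V] (G : SimpleGraph V) (A B : Finset V),
      k ≤ A.card → R ≤ B.card →
      ∃ (A₁ A₀ B' : Finset V), A₁ ⊆ A ∧ A₀ ⊆ A ∧ B' ⊆ B ∧ Disjoint A₁ A₀ ∧
        A₁.card + A₀.card = k ∧ b ≤ B'.card ∧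
        (∀ a ∈ A₁, ∀ y ∈ B', G.Adj a y) ∧ (∀ a ∈ A₀, ∀ y ∈ B', ¬ G.Adj a y) := by
  intro k
  induction k with
  | zero =>
    intro b
    refine ⟨b, fun G A B _ hB => ⟨∅, ∅, B, by simp, by simp, le_rfl, by simp, by simp, hB, ?_, ?_⟩⟩
    · intro a ha; simp at ha
    · intro a ha; simp at ha
  | succ k ih =>
    intro b
    obtain ⟨R', hR'⟩ := ih b
    refine ⟨2 * R' + 1, fun {V} _ G A B hA hB => ?_⟩
    classical
    have hne : A.Nonempty := Finset.card_pos.mp (by omega)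
    obtain ⟨a, ha⟩ := hne
    set B₁ := B.filter (fun y => G.Adj a y) with hB₁
    set B₀ := B.filter (fun y => ¬ G.Adj a y) with hB₀
    have hsum : B₁.card + B₀.card = B.card := Finset.card_filter_add_card_filter_not _
    have hAe : k ≤ (A.erase a).card := by
      rw [Finset.card_erase_of_mem ha]; omega
    have haA : a ∉ A.erase a := Finset.notMem_erase a A
    rcases (by omega : R' ≤ B₁.card ∨ R' ≤ B₀.card) with hc | hc
    · obtain ⟨A₁, A₀, B', s₁, s₀, sB, dis, hcards, hbB, hadj, hnadj⟩ := hR' G (A.erase a) B₁ hAe hc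
      refine ⟨insert a A₁, A₀, B', ?_, fun x hx => Finset.mem_of_mem_erase (s₀ hx), ?_, ?_, ?_, hbB, ?_, hnadj⟩
      · intro x hx
        rcases Finset.mem_insert.mp hx with h | h
        · rw [h]; exact ha
        · exact Finset.mem_of_mem_erase (s₁ h)
      · exact fun y hy => Finset.mem_of_mem_filter y (sB hy)
      · refine Finset.disjoint_left.mpr (fun x hx hx0 => ?_)
        rcases Finset.mem_insert.mp hx with h | h
        · exact haA (h ▸ s₀ hx0)
        · exact (Finset.disjoint_left.mp dis h) hx0
      · rw [Finset.card_insert_of_notMem (fun h => haA (s₁ h))]; omega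
      · intro x hx y hy
        rcases Finset.mem_insert.mp hx with h | h
        · rw [h]; exact (Finset.mem_filter.mp (sB hy)).2
        · exact hadj x h y hy
    · obtain ⟨A₁, A₀, B', s₁, s₀, sB, dis, hcards, hbB, hadj, hnadj⟩ := hR' G (A.erase a) B₀ hAe hc
      refine ⟨A₁, insert a A₀, B', fun x hx => Finset.mem_of_mem_erase (s₁ hx), ?_, ?_, ?_, ?_, hbB, hadj, ?_⟩
      · intro x hx
        rcases Finset.mem_insert.mp hx with h | h
        · rw [h]; exact ha
        · exact Finset.mem_of_mem_erase (s₀ h)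
      · exact fun y hy => Finset.mem_of_mem_filter y (sB hy)
      · refine Finset.disjoint_right.mpr (fun x hx hx0 => ?_)
        rcases Finset.mem_insert.mp hx with h | h
        · exact haA (h ▸ s₁ hx0)
        · exact (Finset.disjoint_left.mp dis hx0) h
      · rw [Finset.card_insert_of_notMem (fun h => haA (s₀ h))]; omega
      · intro x hx y hy
        rcases Finset.mem_insert.mp hx with h | h
        · rw [h]; exact (Finset.mem_filter.mp (sB hy)).2
        · exact hnadj x h y hy

lemma bipRam (n : ℕ) : ∃ R : ℕ,
    ∀ {V : Type} [DecidableEq V] (G : SimpleGraph V) (A B : Finset V),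
      R ≤ A.card → R ≤ B.card →
      ∃ A' B', A' ⊆ A ∧ B' ⊆ B ∧ n ≤ A'.card ∧ n ≤ B'.card ∧
        ((∀ a ∈ A', ∀ y ∈ B', G.Adj a y) ∨ (∀ a ∈ A', ∀ y ∈ B', ¬ G.Adj a y)) := by
  obtain ⟨R', hR'⟩ := bipRamAux (n + n) n
  refine ⟨max R' (n + n), fun G A B hA hB => ?_⟩
  obtain ⟨A₁, A₀, B', s₁, s₀, sB, _, hcards, hbB, hadj, hnadj⟩ :=
    hR' G A B (le_trans (le_max_right _ _) hA) (le_trans (le_max_left _ _) hB)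
  rcases (by omega : n ≤ A₁.card ∨ n ≤ A₀.card) with hc | hc
  · exact ⟨A₁, B', s₁, sB, hc, hbB, Or.inl hadj⟩
  · exact ⟨A₀, B', s₀, sB, hc, hbB, Or.inr hnadj⟩


/-- A clean star system: `q` stars with centers in `T`, leaf sets of size `≥ ℓ` inside `Y`,
each center adjacent to all its own leaves and to no foreign leaves. -/
def StarSys {V : Type} (G : SimpleGraph V) (T Y : Finset V) (q ℓ : ℕ) : Prop :=
  ∃ (c : Fin q → V) (Lf : Fin q → Finset V),
    Function.Injective c ∧ (∀ i, c i ∈ T) ∧ (∀ i, Lf i ⊆ Y) ∧ (∀ i, ℓ ≤ (Lf i).card) ∧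
    (∀ i, ∀ y ∈ Lf i, G.Adj (c i) y) ∧ (∀ i k, i ≠ k → ∀ y ∈ Lf k, ¬ G.Adj (c i) y)

lemma starSys_mono {V : Type} {G : SimpleGraph V} {T Y T' Y' : Finset V} {q ℓ : ℕ}
    (hT : T ⊆ T') (hY : Y ⊆ Y') (h : StarSys G T Y q ℓ) : StarSys G T' Y' q ℓ := by
  obtain ⟨c, Lf, h1, h2, h3, h4, h5, h6⟩ := h
  exact ⟨c, Lf, h1, fun i => hT (h2 i), fun i => (h3 i).trans hY, h4, h5, h6⟩

lemma ovl_comm {V : Type} [DecidableEq V] (G : SimpleGraph V) [DecidableRel G.Adj] (Y : Finset V) (a b : V) :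
    Y.filter (fun y => G.Adj a y ∧ G.Adj b y) = Y.filter (fun y => G.Adj b y ∧ G.Adj a y) := by
  ext y; simp only [Finset.mem_filter]; tauto

lemma pickLight {V : Type} [DecidableEq V] (G : SimpleGraph V) [DecidableRel G.Adj] (T Y : Finset V) (m d : ℕ)
    (OUT : Prop)
    (HIH : ∀ (c : V) (T₁ : Finset V), c ∈ T → T₁ ⊆ T.erase c →
      (∀ x ∈ T₁, d ≤ ((Y.filter (fun y => G.Adj c y)).filter (fun y => G.Adj x y)).card) →
      m ≤ T₁.card → OUT) :
    ∀ (r : ℕ) (T' : Finset V), T' ⊆ T → r * (m + 1) ≤ T'.card →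
      OUT ∨ ∃ c : Fin r → V, Function.Injective c ∧ (∀ i, c i ∈ T') ∧
        (∀ i k : Fin r, i ≠ k →
          (Y.filter (fun y => G.Adj (c i) y ∧ G.Adj (c k) y)).card < d) := by
  intro r
  induction r with
  | zero =>
    exact fun T' _ _ => Or.inr ⟨Fin.elim0, fun a => a.elim0, fun i => i.elim0, fun i => i.elim0⟩
  | succ r ih =>
    intro T' hsub hcard
    have hcard' : r * (m + 1) + (m + 1) ≤ T'.card := by
      rw [← Nat.succ_mul]; exact hcard
    obtain ⟨c, hc⟩ : T'.Nonempty := Finset.card_pos.mp (by omega)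
    set T₁ := (T'.erase c).filter
      (fun x => d ≤ ((Y.filter (fun y => G.Adj c y)).filter (fun y => G.Adj x y)).card) with hT₁
    by_cases hheavy : m ≤ T₁.card
    · refine Or.inl (HIH c T₁ (hsub hc) ?_ ?_ hheavy)
      · exact subset_trans (Finset.filter_subset _ _) (Finset.erase_subset_erase c hsub)
      · intro x hx; exact (Finset.mem_filter.mp hx).2
    · set T'' := T' \ insert c T₁ with hT''
      have hT''card : r * (m + 1) ≤ T''.card := by
        have h1 : (insert c T₁).card ≤ T₁.card + 1 := Finset.card_insert_le _ _
        have h2 : T'.card - (insert c T₁).card ≤ T''.card := Finset.le_card_sdiff _ _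
        omega
      rcases ih T'' (subset_trans (Finset.sdiff_subset) hsub) hT''card with
        out | ⟨cs, hinj, hmem, hovl⟩
      · exact Or.inl out
      · refine Or.inr ⟨Fin.cons c cs, ?_, ?_, ?_⟩
        · refine (Fin.cons_injective_iff).mpr ⟨?_, hinj⟩
          rintro ⟨i, hi⟩
          have : cs i ∈ T'' := hmem i
          rw [hi] at this
          exact (Finset.mem_sdiff.mp this).2 (Finset.mem_insert_self c T₁)
        · intro i
          refine Fin.cases ?_ ?_ i
          · simpa using hc
          · intro i'
            simpa using (Finset.mem_sdiff.mp (hmem i')).1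
        · have key : ∀ i' : Fin r,
              (Y.filter (fun y => G.Adj c y ∧ G.Adj (cs i') y)).card < d := by
            intro i'
            have h1 : cs i' ∈ T'' := hmem i'
            rw [Finset.mem_sdiff] at h1
            have h2 : cs i' ∉ T₁ := fun h => h1.2 (Finset.mem_insert_of_mem h)
            have h3 : cs i' ≠ c := fun h => h1.2 (h ▸ Finset.mem_insert_self c T₁)
            have h4 : cs i' ∈ T'.erase c := Finset.mem_erase.mpr ⟨h3, h1.1⟩
            by_contra hcon
            push_neg at hcon
            apply h2
            rw [hT₁, Finset.mem_filter]
            refine ⟨h4, ?_⟩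
            rwa [Finset.filter_filter]
          intro i k hik
          refine Fin.cases (motive := fun i => i ≠ k → (Y.filter (fun y => G.Adj ((Fin.cons c cs : Fin (r+1) → V) i) y ∧ G.Adj ((Fin.cons c cs : Fin (r+1) → V) k) y)).card < d) ?_ ?_ i hik
          · intro h0k
            refine Fin.cases (motive := fun k => (0 : Fin (r+1)) ≠ k → (Y.filter (fun y => G.Adj ((Fin.cons c cs : Fin (r+1) → V) 0) y ∧ G.Adj ((Fin.cons c cs : Fin (r+1) → V) k) y)).card < d) ?_ ?_ k h0k
            · intro h; exact absurd rfl h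
            · intro k' _
              simpa using key k'
          · intro i' hi'k
            refine Fin.cases (motive := fun k => (i'.succ : Fin (r+1)) ≠ k → (Y.filter (fun y => G.Adj ((Fin.cons c cs : Fin (r+1) → V) i'.succ) y ∧ G.Adj ((Fin.cons c cs : Fin (r+1) → V) k) y)).card < d) ?_ ?_ k hi'k
            · intro _
              rw [ovl_comm]
              simpa using key i'
            · intro k' hne
              have : i' ≠ k' := by
                intro h; exact hne (by rw [h])
              simpa using hovl i' k' this

def commonNb {V : Type} [DecidableEq V] (G : SimpleGraph V) [DecidableRel G.Adj]
    (Y S : Finset V) : Finset V :=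
  Y.filter (fun y => ∀ x ∈ S, G.Adj x y)

/-- The core lemma: from a big independent set of vertices of big degree, extract either
`j+1` of them with a large common neighborhood in `Y`, or a clean star system. -/
lemma CN (n ℓ L : ℕ) : ∀ j : ℕ, ∃ m d : ℕ,
    ∀ {V : Type} [DecidableEq V] (G : SimpleGraph V) [DecidableRel G.Adj] (T Y : Finset V),
      IsIndepF G T → (∀ x ∈ T, d ≤ (Y.filter (fun y => G.Adj x y)).card) → m ≤ T.card →
      (∃ S ⊆ T, j + 1 ≤ S.card ∧ L ≤ (commonNb G Y S).card) ∨ StarSys G T Y n ℓ := by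
  intro j
  induction j with
  | zero =>
    refine ⟨1, L, fun {V} _ G _ T Y _ hdeg hT => ?_⟩
    obtain ⟨x, hx⟩ : T.Nonempty := Finset.card_pos.mp hT
    refine Or.inl ⟨{x}, Finset.singleton_subset_iff.mpr hx, by simp, ?_⟩
    have : commonNb G Y {x} = Y.filter (fun y => G.Adj x y) := by
      ext y; simp [commonNb]
    rw [this]
    exact hdeg x hx
  | succ j ih =>
    obtain ⟨m, d, hmd⟩ := ih
    refine ⟨n * (m + 1), n * d + ℓ, fun {V} _ G _ T Y hind hdeg hT => ?_⟩
    set OUT := (∃ S ⊆ T, j + 2 ≤ S.card ∧ L ≤ (commonNb G Y S).card) ∨ StarSys G T Y n ℓ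
      with hOUT
    have HIH : ∀ (c : V) (T₁ : Finset V), c ∈ T → T₁ ⊆ T.erase c →
        (∀ x ∈ T₁, d ≤ ((Y.filter (fun y => G.Adj c y)).filter (fun y => G.Adj x y)).card) →
        m ≤ T₁.card → OUT := by
      intro c T₁ hcT hsub hdeg1 hm
      have hsubT : T₁ ⊆ T := hsub.trans (Finset.erase_subset c T)
      have hind1 : IsIndepF G T₁ := fun x hx y hy => hind x (hsubT hx) y (hsubT hy)
      rcases hmd G T₁ (Y.filter (fun y => G.Adj c y)) hind1 hdeg1 hm with
        ⟨S, hS1, hS2, hS3⟩ | hstar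
      · left
        have hcS : c ∉ S := fun h => (Finset.notMem_erase c T) (hsub (hS1 h))
        refine ⟨insert c S, ?_, ?_, ?_⟩
        · intro x hx
          rcases Finset.mem_insert.mp hx with h | h
          · rw [h]; exact hcT
          · exact hsubT (hS1 h)
        · rw [Finset.card_insert_of_notMem hcS]; omega
        · refine le_trans hS3 (Finset.card_le_card ?_)
          intro y hy
          rw [commonNb, Finset.mem_filter] at hy ⊢
          rw [Finset.mem_filter] at hy
          refine ⟨hy.1.1, ?_⟩
          intro x hx
          rcases Finset.mem_insert.mp hx with h | h
          · rw [h]; exact hy.1.2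
          · exact hy.2 x h
      · exact Or.inr (starSys_mono hsubT (Finset.filter_subset _ _) hstar)
    rcases pickLight G T Y m d OUT HIH n T (le_refl T) hT with out | ⟨c, hinj, hmem, hovl⟩
    · exact out
    · right
      classical
      refine ⟨c, fun i => (Y.filter (fun y => G.Adj (c i) y)) \
        ((Finset.univ.erase i).biUnion
          (fun k => Y.filter (fun y => G.Adj (c i) y ∧ G.Adj (c k) y))), hinj, hmem, ?_, ?_, ?_, ?_⟩
      · intro i
        exact (Finset.sdiff_subset).trans (Finset.filter_subset _ _)
      · intro i
        have hn1 : 1 ≤ n := i.pos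
        show ℓ ≤ ((Y.filter (fun y => G.Adj (c i) y)) \
          ((Finset.univ.erase i).biUnion
            (fun k => Y.filter (fun y => G.Adj (c i) y ∧ G.Adj (c k) y)))).card
        set Bi := ((Finset.univ.erase i).biUnion
          (fun k => Y.filter (fun y => G.Adj (c i) y ∧ G.Adj (c k) y))) with hBi
        have hb : Bi.card ≤ (n - 1) * d := by
          refine le_trans (Finset.card_biUnion_le) ?_
          have : ∀ k ∈ Finset.univ.erase i,
              (Y.filter (fun y => G.Adj (c i) y ∧ G.Adj (c k) y)).card ≤ d := by
            intro k hk
            exact le_of_lt (hovl i k (Ne.symm (Finset.mem_erase.mp hk).1))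
          refine le_trans (Finset.sum_le_card_nsmul _ _ d this) ?_
          have : (Finset.univ.erase i).card = n - 1 := by
            rw [Finset.card_erase_of_mem (Finset.mem_univ i)]
            simp
          rw [this]; simp
        have hdegi : n * d + ℓ ≤ (Y.filter (fun y => G.Adj (c i) y)).card :=
          hdeg (c i) (hmem i)
        have hsd := Finset.le_card_sdiff Bi (Y.filter (fun y => G.Adj (c i) y))
        have harith : (n - 1) * d + d = n * d := by
          obtain ⟨n', rfl⟩ : ∃ n', n = n' + 1 := ⟨n - 1, by omega⟩
          ring_nf
          simp [Nat.add_mul]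
        omega
      · intro i y hy
        exact (Finset.mem_filter.mp ((Finset.mem_sdiff.mp hy).1)).2
      · intro i k hik y hy
        intro hadj
        rw [Finset.mem_sdiff] at hy
        refine hy.2 (Finset.mem_biUnion.mpr ⟨i, ?_, ?_⟩)
        · exact Finset.mem_erase.mpr ⟨hik, Finset.mem_univ i⟩
        · have hyY : y ∈ Y := Finset.mem_of_mem_filter y hy.1
          have hadjk : G.Adj (c k) y := (Finset.mem_filter.mp hy.1).2
          exact Finset.mem_filter.mpr ⟨hyY, hadjk, hadj⟩


def BicliqueOut {V : Type} (G : SimpleGraph V) (n : ℕ) : Prop :=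
  ∃ A B : Finset V, n ≤ A.card ∧ n ≤ B.card ∧ IsIndepF G A ∧ IsIndepF G B ∧
    (∀ a ∈ A, ∀ b ∈ B, G.Adj a b)

lemma isIndepF_mono {V : Type} {G : SimpleGraph V} {s t : Finset V} (h : s ⊆ t)
    (ht : IsIndepF G t) : IsIndepF G s := fun x hx y hy => ht x (h hx) y (h hy)

lemma cleanOne (n : ℕ) : ∀ (k s : ℕ), ∃ τ : ℕ,
    ∀ {V : Type} [DecidableEq V] (G : SimpleGraph V) (A : Finset V) (Bs : Fin k → Finset V),
      τ ≤ A.card → (∀ i, τ ≤ (Bs i).card) → IsIndepF G A → (∀ i, IsIndepF G (Bs i)) →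
      BicliqueOut G n ∨ ∃ (A' : Finset V) (Bs' : Fin k → Finset V),
        A' ⊆ A ∧ (∀ i, Bs' i ⊆ Bs i) ∧ s ≤ A'.card ∧ (∀ i, s ≤ (Bs' i).card) ∧
        (∀ i, ∀ a ∈ A', ∀ b ∈ Bs' i, ¬ G.Adj a b) := by
  intro k
  induction k with
  | zero =>
    intro s
    exact ⟨s, fun G A Bs hA _ _ _ =>
      Or.inr ⟨A, Bs, le_refl _, fun i => le_refl _, hA, fun i => i.elim0, fun i => i.elim0⟩⟩
  | succ k ih =>
    intro s
    obtain ⟨τk, hτk⟩ := ih s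
    obtain ⟨Rb, hRb⟩ := bipRam (max (max τk s) n)
    refine ⟨max Rb τk, fun {V} _ G A Bs hA hBs hiA hiB => ?_⟩
    obtain ⟨A₁, B₁, hA₁sub, hB₁sub, hA₁c, hB₁c, hcr⟩ :=
      hRb G A (Bs 0) (le_trans (le_max_left _ _) hA) (le_trans (le_max_left _ _) (hBs 0))
    rcases hcr with hall | hnone
    · left
      exact ⟨A₁, B₁, le_trans (le_max_right _ _) hA₁c, le_trans (le_max_right _ _) hB₁c,
        isIndepF_mono hA₁sub hiA, isIndepF_mono hB₁sub (hiB 0), hall⟩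
    · rcases hτk G A₁ (fun i => Bs i.succ)
        (le_trans (le_trans (le_max_left _ _) (le_max_left _ _)) hA₁c)
        (fun i => le_trans (le_max_right _ _) (hBs i.succ))
        (isIndepF_mono hA₁sub hiA) (fun i => hiB i.succ) with hbc | ⟨A', Bs'', h1, h2, h3, h4, h5⟩
      · exact Or.inl hbc
      · right
        refine ⟨A', Fin.cons B₁ Bs'', h1.trans hA₁sub, ?_, h3, ?_, ?_⟩
        · intro i
          refine Fin.cases ?_ ?_ i
          · simpa using hB₁sub
          · intro i'; simpa using h2 i'
        · intro i
          refine Fin.cases ?_ ?_ i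
          · simpa using le_trans (le_trans (le_max_right _ _) (le_max_left _ _)) hB₁c
          · intro i'; simpa using h4 i'
        · intro i
          refine Fin.cases ?_ ?_ i
          · intro a ha b hb
            simp only [Fin.cons_zero] at hb
            exact hnone a (h1 ha) b hb
          · intro i' a ha b hb
            simp only [Fin.cons_succ] at hb
            exact h5 i' a ha b hb

lemma clean (n : ℕ) : ∀ (q : ℕ), ∃ σ : ℕ,
    ∀ {V : Type} [DecidableEq V] (G : SimpleGraph V) (Lf : Fin q → Finset V),
      (∀ i, σ ≤ (Lf i).card) → (∀ i, IsIndepF G (Lf i)) →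
      BicliqueOut G n ∨ ∃ Lf' : Fin q → Finset V,
        (∀ i, Lf' i ⊆ Lf i) ∧ (∀ i, n ≤ (Lf' i).card) ∧
        (∀ i k, i ≠ k → ∀ y ∈ Lf' i, ∀ z ∈ Lf' k, ¬ G.Adj y z) := by
  intro q
  induction q with
  | zero =>
    exact ⟨n, fun G Lf hc _ =>
      Or.inr ⟨Lf, fun i => le_refl _, fun i => i.elim0, fun i => i.elim0⟩⟩
  | succ q ih =>
    obtain ⟨σq, hσq⟩ := ih
    obtain ⟨τ, hτ⟩ := cleanOne n q (max n σq)
    refine ⟨τ, fun {V} _ G Lf hc hind => ?_⟩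
    rcases hτ G (Lf 0) (fun i => Lf i.succ) (hc 0) (fun i => hc i.succ) (hind 0)
      (fun i => hind i.succ) with hbc | ⟨A', Bs', h1, h2, h3, h4, h5⟩
    · exact Or.inl hbc
    · rcases hσq G Bs' (fun i => le_trans (le_max_right _ _) (h4 i))
        (fun i => isIndepF_mono (h2 i) (hind i.succ)) with hbc | ⟨Lf'', g1, g2, g3⟩
      · exact Or.inl hbc
      · right
        refine ⟨Fin.cons A' Lf'', ?_, ?_, ?_⟩
        · intro i
          refine Fin.cases ?_ ?_ i
          · simpa using h1
          · intro i'; simpa using (g1 i').trans (h2 i')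
        · intro i
          refine Fin.cases ?_ ?_ i
          · simpa using le_trans (le_max_left _ _) h3
          · intro i'; simpa using g2 i'
        · intro i k hik
          refine Fin.cases (motive := fun i => i ≠ k →
            ∀ y ∈ (Fin.cons A' Lf'' : Fin (q+1) → Finset V) i,
              ∀ z ∈ (Fin.cons A' Lf'' : Fin (q+1) → Finset V) k, ¬ G.Adj y z) ?_ ?_ i hik
          · intro h0k
            refine Fin.cases (motive := fun k => (0 : Fin (q+1)) ≠ k →
              ∀ y ∈ (Fin.cons A' Lf'' : Fin (q+1) → Finset V) 0,
                ∀ z ∈ (Fin.cons A' Lf'' : Fin (q+1) → Finset V) k, ¬ G.Adj y z) ?_ ?_ k h0k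
            · intro h; exact absurd rfl h
            · intro k' _ y hy z hz
              simp only [Fin.cons_zero] at hy
              simp only [Fin.cons_succ] at hz
              exact h5 k' y hy z (g1 k' hz)
          · intro i' hi'k
            refine Fin.cases (motive := fun k => (i'.succ : Fin (q+1)) ≠ k →
              ∀ y ∈ (Fin.cons A' Lf'' : Fin (q+1) → Finset V) i'.succ,
                ∀ z ∈ (Fin.cons A' Lf'' : Fin (q+1) → Finset V) k, ¬ G.Adj y z) ?_ ?_ k hi'k
            · intro _ y hy z hz
              simp only [Fin.cons_succ] at hy
              simp only [Fin.cons_zero] at hz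
              exact fun hadj => h5 i' z hz y (g1 i' hy) hadj.symm
            · intro k' hne y hy z hz
              simp only [Fin.cons_succ] at hy hz
              have : i' ≠ k' := fun h => hne (by rw [h])
              exact g3 i' k' this y hy z hz


def CliqueOut {V : Type} (G : SimpleGraph V) (n : ℕ) : Prop :=
  ∃ B : Finset V, n ≤ B.card ∧ IsCliqueF G B

def SFOut {V : Type} (G : SimpleGraph V) (n : ℕ) : Prop :=
  ∃ (c : Fin n → V) (Lf : Fin n → Finset V),
    Function.Injective c ∧ (∀ i k, ¬ G.Adj (c i) (c k)) ∧ (∀ i, n ≤ (Lf i).card) ∧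
    (∀ i, IsIndepF G (Lf i)) ∧ (∀ i, ∀ y ∈ Lf i, G.Adj (c i) y) ∧
    (∀ i k, i ≠ k → ∀ y ∈ Lf k, ¬ G.Adj (c i) y) ∧
    (∀ i k, i ≠ k → ∀ y ∈ Lf i, ∀ z ∈ Lf k, ¬ G.Adj y z)

lemma mem_commonNb {V : Type} [DecidableEq V] (G : SimpleGraph V) [DecidableRel G.Adj]
    {Y S : Finset V} {y : V} : y ∈ commonNb G Y S ↔ y ∈ Y ∧ ∀ x ∈ S, G.Adj x y := by
  unfold commonNb; exact Finset.mem_filter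

lemma isIndepF_mono' {V : Type} {G : SimpleGraph V} {s t : Finset V} (h : s ⊆ t)
    (ht : IsIndepF G t) : IsIndepF G s := fun x hx y hy => ht x (h hx) y (h hy)

/-- The key structural lemma: a graph with many vertices of large degree contains a big
clique, a big "induced biclique", or a big clean induced star forest. -/
lemma keyLemma (n : ℕ) : ∃ K : ℕ,
    ∀ {V : Type} [Fintype V] [DecidableEq V] (G : SimpleGraph V) [DecidableRel G.Adj]
      (A : Finset V), K ≤ A.card → (∀ v ∈ A, K ≤ G.degree v) →
      CliqueOut G n ∨ BicliqueOut G n ∨ SFOut G n := by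
  match n with
  | 0 =>
    refine ⟨0, ?_⟩
    intro V _ _ G _ A _ _
    refine Or.inl ⟨∅, le_refl _, ?_⟩
    intro x hx; simp at hx
  | n + 1 =>
    set N := n + 1
    obtain ⟨L, hL⟩ := myRamsey N N
    obtain ⟨σ, hσ⟩ := clean N N
    obtain ⟨ℓ, hℓ⟩ := myRamsey N σ
    obtain ⟨m, d, hCN⟩ := CN N ℓ L n
    obtain ⟨R0, hR0⟩ := myRamsey N m
    refine ⟨max R0 d, fun {V} _ _ G _ A hA hdeg => ?_⟩
    rcases hR0 G A (le_trans (le_max_left _ _) hA) with ⟨B, _, hBc, hBcl⟩ | ⟨T, hTsub, hTc, hTind⟩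
    · exact Or.inl ⟨B, hBc, hBcl⟩
    · have hdegT : ∀ x ∈ T, d ≤ ((Finset.univ : Finset V).filter (fun y => G.Adj x y)).card := by
        intro x hx
        have : (Finset.univ : Finset V).filter (fun y => G.Adj x y) = G.neighborFinset x := by
          ext y; simp
        rw [this, SimpleGraph.card_neighborFinset_eq_degree]
        exact le_trans (le_max_right _ _) (hdeg x (hTsub hx))
      rcases hCN G T Finset.univ hTind hdegT hTc with ⟨S, hSsub, hSc, hScm⟩ | hstar
      · -- many common neighbors: Ramsey the common neighborhood
        rcases hL G (commonNb G Finset.univ S) hScm with ⟨B, _, hBc, hBcl⟩ | ⟨B, hBsub, hBc, hBind⟩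
        · exact Or.inl ⟨B, hBc, hBcl⟩
        · refine Or.inr (Or.inl ⟨S, B, hSc, hBc, ?_, hBind, ?_⟩)
          · exact isIndepF_mono' hSsub hTind
          · intro a ha b hb
            exact ((mem_commonNb G).mp (hBsub hb)).2 a ha
      · obtain ⟨c, Lf, hinj, hmemT, _, hLfc, hadj, hforeign⟩ := hstar
        by_cases hcl : CliqueOut G N
        · exact Or.inl hcl
        · have hchoose : ∀ i, ∃ Li, Li ⊆ Lf i ∧ σ ≤ Li.card ∧ IsIndepF G Li := by
            intro i
            rcases hℓ G (Lf i) (hLfc i) with ⟨B, hBsub, hBc, hBcl⟩ | ⟨B, hBsub, hBc, hBind⟩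
            · exact absurd ⟨B, hBc, hBcl⟩ hcl
            · exact ⟨B, hBsub, hBc, hBind⟩
          choose LI hLIsub hLIc hLIind using hchoose
          rcases hσ G LI hLIc hLIind with hbc | ⟨Lf', hsub', hc', hcross⟩
          · exact Or.inr (Or.inl hbc)
          · refine Or.inr (Or.inr ⟨c, Lf', hinj, ?_, hc', ?_, ?_, ?_, hcross⟩)
            · intro i k; exact hTind (c i) (hmemT i) (c k) (hmemT k)
            · intro i; exact isIndepF_mono' (hsub' i) (hLIind i)
            · intro i y hy; exact hadj i y (hLIsub i ((hsub' i) hy))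
            · intro i k hik y hy; exact hforeign i k hik y (hLIsub k ((hsub' k) hy))


/-- Pick an enumeration of a finset of card `n`. -/
lemma enumOfCard {V : Type} {s : Finset V} {n : ℕ} (h : n ≤ s.card) :
    ∃ f : Fin n → V, Function.Injective f ∧ ∀ i, f i ∈ s := by
  classical
  obtain ⟨t, hts, htc⟩ := Finset.exists_subset_card_eq h
  have : Fintype.card t = n := by rw [Fintype.card_coe]; exact htc
  let e := (Fintype.equivFinOfCardEq this).symm
  exact ⟨fun i => (e i : V), fun i j hij => e.injective (Subtype.ext hij),
    fun i => hts (e i).2⟩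

lemma cliqueOut_emb {V : Type} {G : SimpleGraph V} {n : ℕ} (h : CliqueOut G n) :
    Nonempty ((⊤ : SimpleGraph (Fin n)) ↪g G) := by
  obtain ⟨B, hBc, hBcl⟩ := h
  obtain ⟨f, hfi, hfm⟩ := enumOfCard hBc
  refine ⟨⟨⟨f, hfi⟩, ?_⟩⟩
  intro a b
  simp only [Function.Embedding.coeFn_mk, top_adj]
  constructor
  · intro h; exact fun hab => (G.loopless.irrefl (f a)) (hab ▸ h)
  · intro hab; exact hBcl (f a) (hfm a) (f b) (hfm b) (fun h => hab (hfi h))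

lemma bicliqueOut_emb {V : Type} {G : SimpleGraph V} {n : ℕ} (h : BicliqueOut G n) :
    Nonempty (completeBipartiteGraph (Fin n) (Fin n) ↪g G) := by
  obtain ⟨A, B, hAc, hBc, hAi, hBi, hcr⟩ := h
  obtain ⟨f, hfi, hfm⟩ := enumOfCard hAc
  obtain ⟨g, hgi, hgm⟩ := enumOfCard hBc
  have hfg : ∀ a b, f a ≠ g b := by
    intro a b heq
    exact (G.loopless.irrefl (g b)) (heq ▸ hcr (f a) (hfm a) (g b) (hgm b))
  refine ⟨⟨⟨Sum.elim f g, ?_⟩, ?_⟩⟩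
  · intro x y hxy
    cases x with
    | inl a => cases y with
      | inl b => exact congrArg Sum.inl (hfi hxy)
      | inr b => exact absurd hxy (hfg a b)
    | inr a => cases y with
      | inl b => exact absurd hxy.symm (hfg b a)
      | inr b => exact congrArg Sum.inr (hgi hxy)
  · intro x y
    cases x with
    | inl a => cases y with
      | inl b =>
        simp only [Function.Embedding.coeFn_mk, Sum.elim_inl, completeBipartiteGraph]
        constructor
        · intro h; exact absurd h (hAi (f a) (hfm a) (f b) (hfm b))
        · simp
      | inr b =>
        simp only [Function.Embedding.coeFn_mk, Sum.elim_inl, Sum.elim_inr, completeBipartiteGraph]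
        constructor
        · intro _; simp
        · intro _; exact hcr (f a) (hfm a) (g b) (hgm b)
    | inr a => cases y with
      | inl b =>
        simp only [Function.Embedding.coeFn_mk, Sum.elim_inl, Sum.elim_inr, completeBipartiteGraph]
        constructor
        · intro _; simp
        · intro _; exact (hcr (f b) (hfm b) (g a) (hgm a)).symm
      | inr b =>
        simp only [Function.Embedding.coeFn_mk, Sum.elim_inr, completeBipartiteGraph]
        constructor
        · intro h; exact absurd h (hBi (g a) (hgm a) (g b) (hgm b))
        · simp

lemma sfOut_emb {V : Type} {G : SimpleGraph V} {n : ℕ} (h : SFOut G n) :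
    Nonempty (starForest n ↪g G) := by
  obtain ⟨c, Lf, hinj, hcc, hLc, hLi, hadj, hfor, hll⟩ := h
  have hench : ∀ i : Fin n, ∃ g : Fin n → V, Function.Injective g ∧ ∀ j, g j ∈ Lf i :=
    fun i => enumOfCard (hLc i)
  choose g hgi hgm using hench
  -- the embedding map
  set F : Fin n × Fin (n+1) → V :=
    fun p => if h : p.2 = 0 then c p.1 else g p.1 (p.2.pred h) with hF
  have hFc : ∀ i : Fin n, F (i, 0) = c i := fun i => by simp [hF]
  have hFl : ∀ (i : Fin n) (j : Fin (n+1)) (hj : j ≠ 0), F (i, j) = g i (j.pred hj) := by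
    intro i j hj; simp [hF, hj]
  -- centers are never leaves
  have hcl : ∀ (i k : Fin n) (j : Fin n), c i ≠ g k j := by
    intro i k j heq
    exact hcc k i (heq ▸ hadj k (g k j) (hgm k j))
  -- leaves of distinct stars are distinct
  have hgg : ∀ (i k : Fin n) (a b : Fin n), i ≠ k → g i a ≠ g k b := by
    intro i k a b hik heq
    have h1 : G.Adj (c i) (g i a) := hadj i _ (hgm i a)
    rw [heq] at h1
    exact hfor i k hik (g k b) (hgm k b) h1
  have hFinj : Function.Injective F := by
    rintro ⟨i, j⟩ ⟨i', j'⟩ heq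
    by_cases hj : j = 0 <;> by_cases hj' : j' = 0
    · rw [hj, hj'] at heq ⊢
      rw [hFc, hFc] at heq
      rw [hinj heq]
    · rw [hj] at heq ⊢
      rw [hFc, hFl i' j' hj'] at heq
      exact absurd heq (hcl i i' _)
    · rw [hj'] at heq ⊢
      rw [hFc, hFl i j hj] at heq
      exact absurd heq.symm (hcl i' i _)
    · rw [hFl i j hj, hFl i' j' hj'] at heq
      by_cases hii : i = i'
      · subst hii
        have := hgi i heq
        have : j = j' := by
          have h2 := congrArg Fin.succ this
          rwa [Fin.succ_pred, Fin.succ_pred] at h2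
        rw [this]
      · exact absurd heq (hgg i i' _ _ hii)
  refine ⟨⟨⟨F, hFinj⟩, ?_⟩⟩
  rintro ⟨i, j⟩ ⟨i', j'⟩
  simp only [Function.Embedding.coeFn_mk]
  rw [starForest, SimpleGraph.fromRel_adj]
  by_cases hj : j = 0 <;> by_cases hj' : j' = 0
  · subst hj; subst hj'
    rw [hFc, hFc]
    constructor
    · intro h; exact absurd h (hcc i i')
    · rintro ⟨-, ⟨-, -, h⟩ | ⟨-, -, h⟩⟩ <;> exact absurd rfl h
  · subst hj
    rw [hFc, hFl i' j' hj']
    constructor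
    · intro h
      by_cases hii : i = i'
      · refine ⟨?_, Or.inl ⟨hii, rfl, hj'⟩⟩
        intro hpq
        exact hj' ((congrArg Prod.snd hpq).symm)
      · exact absurd h (hfor i i' hii _ (hgm i' _))
    · rintro ⟨hne, ⟨hii, -, -⟩ | ⟨-, hj'0, -⟩⟩
      · have hii' : i = i' := hii
        rw [hii']; exact hadj i' _ (hgm i' _)
      · exact absurd hj'0 hj'
  · subst hj'
    rw [hFc, hFl i j hj]
    constructor
    · intro h
      by_cases hii : i' = i
      · refine ⟨?_, Or.inr ⟨hii, rfl, hj⟩⟩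
        intro hpq
        exact hj (congrArg Prod.snd hpq)
      · exact absurd h.symm (hfor i' i hii _ (hgm i _))
    · rintro ⟨hne, ⟨-, hj0, -⟩ | ⟨hii, -, -⟩⟩
      · exact absurd hj0 hj
      · have hii' : i' = i := hii
        rw [hii']; exact (hadj i _ (hgm i _)).symm
  · rw [hFl i j hj, hFl i' j' hj']
    constructor
    · intro h
      by_cases hii : i = i'
      · subst hii
        exact absurd h (hLi i _ (hgm i _) _ (hgm i _))
      · exact absurd h (hll i i' hii _ (hgm i _) _ (hgm i' _))
    · rintro ⟨-, ⟨-, hj0, -⟩ | ⟨-, hj'0, -⟩⟩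
      · exact absurd hj0 hj
      · exact absurd hj'0 hj'


/-- `K_{n,n}` transported to `Fin (n+n)`. -/
def bipF (n : ℕ) : SimpleGraph (Fin (n + n)) :=
  SimpleGraph.comap (finSumFinEquiv.symm) (completeBipartiteGraph (Fin n) (Fin n))

def bipIso (n : ℕ) : bipF n ≃g completeBipartiteGraph (Fin n) (Fin n) :=
  ⟨finSumFinEquiv.symm, Iff.rfl⟩

/-- `nK_{1,n}` transported to `Fin (n*(n+1))`. -/
def sfF (n : ℕ) : SimpleGraph (Fin (n * (n + 1))) :=
  SimpleGraph.comap (finProdFinEquiv.symm) (starForest n)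

def sfIso (n : ℕ) : sfF n ≃g starForest n :=
  ⟨finProdFinEquiv.symm, Iff.rfl⟩

def topEmb {m n : ℕ} (h : m ≤ n) : (⊤ : SimpleGraph (Fin m)) ↪g (⊤ : SimpleGraph (Fin n)) := by
  refine ⟨⟨Fin.castLE h, Fin.castLE_injective h⟩, ?_⟩
  intro a b
  simp [Ne, Fin.castLE_inj]

def bipEmb {m n : ℕ} (h : m ≤ n) :
    completeBipartiteGraph (Fin m) (Fin m) ↪g completeBipartiteGraph (Fin n) (Fin n) := by
  refine ⟨⟨Sum.map (Fin.castLE h) (Fin.castLE h), ?_⟩, ?_⟩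
  · intro a b hab
    cases a <;> cases b <;> simp only [Sum.map_inl, Sum.map_inr] at hab <;>
      simp_all [Fin.castLE_inj]
  · intro a b
    show (completeBipartiteGraph (Fin n) (Fin n)).Adj (Sum.map (Fin.castLE h) (Fin.castLE h) a)
      (Sum.map (Fin.castLE h) (Fin.castLE h) b) ↔ _
    cases a <;> cases b <;> simp [completeBipartiteGraph]

def sfEmb {m n : ℕ} (h : m ≤ n) : starForest m ↪g starForest n := by
  have h1 : m + 1 ≤ n + 1 := Nat.succ_le_succ h
  refine ⟨⟨Prod.map (Fin.castLE h) (Fin.castLE h1), ?_⟩, ?_⟩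
  · rintro ⟨a1, a2⟩ ⟨b1, b2⟩ hab
    simp only [Prod.map, Prod.mk.injEq, Fin.castLE_inj] at hab
    simp [Prod.ext_iff, hab]
  · rintro ⟨a1, a2⟩ ⟨b1, b2⟩
    show (starForest n).Adj (Fin.castLE h a1, Fin.castLE h1 a2) (Fin.castLE h b1, Fin.castLE h1 b2)
      ↔ (starForest m).Adj (a1, a2) (b1, b2)
    have hz : ∀ x : Fin (m+1), Fin.castLE h1 x = 0 ↔ x = 0 := fun x => by
      simp only [Fin.ext_iff, Fin.val_castLE, Fin.val_zero]
    simp only [starForest, SimpleGraph.fromRel_adj, Ne, Prod.mk.injEq, not_and,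
      Fin.castLE_inj, hz]

lemma le_ncard_of_inj {V : Type} [Fintype V] {k : ℕ} {S : Set V} (f : Fin k → V)
    (hinj : Function.Injective f) (hmem : ∀ i, f i ∈ S) : k ≤ S.ncard := by
  classical
  have h1 : ((Finset.univ.image f : Finset V) : Set V) ⊆ S := by
    intro x hx
    simp only [Finset.coe_image, Finset.coe_univ, Set.image_univ] at hx
    obtain ⟨i, rfl⟩ := hx
    exact hmem i
  have h2 : (Finset.univ.image f).card = k := by
    rw [Finset.card_image_of_injective _ hinj, Finset.card_univ, Fintype.card_fin]
  calc k = ((Finset.univ.image f : Finset V) : Set V).ncard := by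
        rw [Set.ncard_coe_finset, h2]
    _ ≤ S.ncard := Set.ncard_le_ncard h1 (Set.toFinite S)

lemma hindex_finset {V : Type} [Fintype V] [DecidableEq V] (G : SimpleGraph V)
    [DecidableRel G.Adj] {k : ℕ} (h : HIndexAtLeast G k) :
    ∃ A : Finset V, k ≤ A.card ∧ ∀ v ∈ A, k ≤ G.degree v := by
  classical
  refine ⟨{v : V | k ≤ (G.neighborSet v).ncard}.toFinset, ?_, ?_⟩
  · rw [← Set.ncard_eq_toFinset_card']
    exact h
  · intro v hv
    rw [Set.mem_toFinset] at hv
    simp only [Set.mem_setOf_eq] at hv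
    have hh : (G.neighborSet v).ncard = G.degree v := by
      rw [← Nat.card_coe_set_eq, Nat.card_eq_fintype_card]
      exact SimpleGraph.card_neighborSet_eq_degree G v
    rwa [hh] at hv

lemma easy_top (k : ℕ) : HIndexAtLeast (⊤ : SimpleGraph (Fin (k + 1))) k := by
  refine le_ncard_of_inj (fun i => Fin.castSucc i) (Fin.castSucc_injective k) ?_
  intro i
  refine le_ncard_of_inj (fun j => (Fin.castSucc i).succAbove j)
    Fin.succAbove_right_injective ?_
  intro j
  simp only [SimpleGraph.mem_neighborSet, top_adj]
  exact (Fin.succAbove_ne _ j).symm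

lemma easy_bip (k : ℕ) : HIndexAtLeast (completeBipartiteGraph (Fin k) (Fin k)) k := by
  refine le_ncard_of_inj (fun i => Sum.inl i) Sum.inl_injective ?_
  intro i
  refine le_ncard_of_inj (fun j => Sum.inr j) Sum.inr_injective ?_
  intro j
  simp [completeBipartiteGraph]

lemma easy_sf (k : ℕ) : HIndexAtLeast (starForest k) k := by
  refine le_ncard_of_inj (fun i => ((i, 0) : Fin k × Fin (k+1))) ?_ ?_
  · intro a b hab
    exact congrArg Prod.fst hab
  · intro i
    refine le_ncard_of_inj (fun j => ((i, j.succ) : Fin k × Fin (k+1))) ?_ ?_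
    · intro a b hab
      exact Fin.succ_injective _ (congrArg Prod.snd hab)
    · intro j
      rw [SimpleGraph.mem_neighborSet, starForest, SimpleGraph.fromRel_adj]
      refine ⟨?_, Or.inl ⟨rfl, rfl, Fin.succ_ne_zero j⟩⟩
      intro hpq
      exact Fin.succ_ne_zero j ((congrArg Prod.snd hpq).symm)


/-- A hereditary class of unbounded h-index contains all complete graphs, or all
complete bipartite graphs `K_{n,n}`, or all star forests `nK_{1,n}`; conversely the
classes of complete graphs, of complete bipartite graphs, and of star forests each
have unbounded h-index — so these are the only three minimal hereditary classes of
unbounded h-index. -/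
theorem statement18 (C : GraphClass) (hC : Hereditary C)
    (hunb : ∀ k : ℕ, ∃ (n : ℕ) (G : SimpleGraph (Fin n)), C n G ∧ HIndexAtLeast G k) :
    ((∀ n : ℕ, C n ⊤) ∨
      (∀ n : ℕ, ∃ G : SimpleGraph (Fin (n + n)),
        Nonempty (G ≃g completeBipartiteGraph (Fin n) (Fin n)) ∧ C (n + n) G) ∨
      (∀ n : ℕ, ∃ G : SimpleGraph (Fin (n * (n + 1))),
        Nonempty (G ≃g starForest n) ∧ C (n * (n + 1)) G)) ∧
    (∀ k : ℕ, ∃ n : ℕ, HIndexAtLeast (⊤ : SimpleGraph (Fin n)) k) ∧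
    (∀ k : ℕ, ∃ n : ℕ, HIndexAtLeast (completeBipartiteGraph (Fin n) (Fin n)) k) ∧
    (∀ k : ℕ, ∃ n : ℕ, HIndexAtLeast (starForest n) k) := by
  constructor
  · have main : ∀ n : ℕ, C n ⊤ ∨ C (n + n) (bipF n) ∨ C (n * (n + 1)) (sfF n) := by
      intro n
      obtain ⟨K, hK⟩ := keyLemma n
      obtain ⟨N, G, hCG, hH⟩ := hunb K
      classical
      obtain ⟨A, hAc, hAd⟩ := hindex_finset G hH
      rcases hK G A hAc hAd with h | h | h
      · obtain ⟨e⟩ := cliqueOut_emb h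
        exact Or.inl (hC G ⊤ hCG ⟨e⟩)
      · obtain ⟨e⟩ := bicliqueOut_emb h
        exact Or.inr (Or.inl (hC G (bipF n) hCG ⟨e.comp (bipIso n).toEmbedding⟩))
      · obtain ⟨e⟩ := sfOut_emb h
        exact Or.inr (Or.inr (hC G (sfF n) hCG ⟨e.comp (sfIso n).toEmbedding⟩))
    by_cases h1 : ∀ n, C n ⊤
    · exact Or.inl h1
    by_cases h2 : ∀ n, C (n + n) (bipF n)
    · exact Or.inr (Or.inl (fun n => ⟨bipF n, ⟨bipIso n⟩, h2 n⟩))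
    by_cases h3 : ∀ n, C (n * (n + 1)) (sfF n)
    · exact Or.inr (Or.inr (fun n => ⟨sfF n, ⟨sfIso n⟩, h3 n⟩))
    exfalso
    push_neg at h1 h2 h3
    obtain ⟨n1, hn1⟩ := h1
    obtain ⟨n2, hn2⟩ := h2
    obtain ⟨n3, hn3⟩ := h3
    set N := max (max n1 n2) n3 with hN
    have hle1 : n1 ≤ N := le_trans (le_max_left n1 n2) (le_max_left _ n3)
    have hle2 : n2 ≤ N := le_trans (le_max_right n1 n2) (le_max_left _ n3)
    have hle3 : n3 ≤ N := le_max_right _ n3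
    rcases main N with h | h | h
    · exact hn1 (hC _ _ h ⟨topEmb hle1⟩)
    · refine hn2 (hC _ _ h ⟨?_⟩)
      exact ((bipIso N).symm.toEmbedding.comp ((bipEmb hle2).comp (bipIso n2).toEmbedding))
    · refine hn3 (hC _ _ h ⟨?_⟩)
      exact ((sfIso N).symm.toEmbedding.comp ((sfEmb hle3).comp (sfIso n3).toEmbedding))
  · exact ⟨fun k => ⟨k + 1, easy_top k⟩, fun k => ⟨k, easy_bip k⟩, fun k => ⟨k, easy_sf k⟩⟩
end

section
/- For every integer n ≥ 1 there exists an integer d = d(n) such that every finite simple graph containing at least d vertices of degree at least d (i.e., of h-index at least d) contains a clique of size n, or an induced subgraph isomorphic to the complete bipartite graph K_{n,n}, or an induced subgraph isomorphic to nK_{1,n} (the disjoint union of n copies of the star K_{1,n}). -/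
open SimpleGraph

open Finset

namespace Statement19

set_option linter.unusedSectionVars false

variable {V : Type} [DecidableEq V] (G : SimpleGraph V) [DecidableRel G.Adj]


variable {V : Type} [DecidableEq V] (G : SimpleGraph V) [DecidableRel G.Adj]

/-- Ramsey-type bound. -/
def ramr : ℕ → ℕ → ℕ
  | 0, _ => 0
  | _+1, 0 => 0
  | a+1, b+1 => ramr a (b+1) + ramr (a+1) b + 1

lemma ramsey_main (k : ℕ) : ∀ (a b : ℕ) (s : Finset V), a + b = k → ramr a b ≤ s.card →
    (∃ t ⊆ s, t.card = a ∧ ∀ x ∈ t, ∀ y ∈ t, x ≠ y → G.Adj x y) ∨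
    (∃ t ⊆ s, t.card = b ∧ ∀ x ∈ t, ∀ y ∈ t, x ≠ y → ¬ G.Adj x y) := by
  induction k with
  | zero =>
    intro a b s hab _
    obtain ⟨rfl, rfl⟩ : a = 0 ∧ b = 0 := by omega
    exact Or.inl ⟨∅, by simp⟩
  | succ k ih =>
    intro a b s hab hcard
    match a, b with
    | 0, b => exact Or.inl ⟨∅, by simp⟩
    | a+1, 0 => exact Or.inr ⟨∅, by simp⟩
    | a+1, b+1 =>
      have hr : ramr (a+1) (b+1) = ramr a (b+1) + ramr (a+1) b + 1 := by simp [ramr]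
      have hpos : 0 < s.card := by omega
      obtain ⟨v, hv⟩ := Finset.card_pos.mp hpos
      set A := (s.erase v).filter (fun y => G.Adj v y) with hA
      set B := (s.erase v).filter (fun y => ¬ G.Adj v y) with hB
      have hAB : A.card + B.card = s.card - 1 := by
        rw [hA, hB, Finset.card_filter_add_card_filter_not, Finset.card_erase_of_mem hv]
      have hcases : ramr a (b+1) ≤ A.card ∨ ramr (a+1) b ≤ B.card := by omega
      rcases hcases with hc | hc
      · rcases ih a (b+1) A (by omega) hc with ⟨t, hts, htc, hta⟩ | ⟨t, hts, htc, hta⟩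
        · left
          have hvt : v ∉ t := fun h => (Finset.mem_erase.mp ((Finset.mem_filter.mp (hts h)).1)).1 rfl
          refine ⟨insert v t, ?_, by rw [Finset.card_insert_of_notMem hvt, htc], ?_⟩
          · intro x hx
            rcases Finset.mem_insert.mp hx with rfl | hx
            · exact hv
            · exact Finset.mem_of_mem_erase (Finset.mem_filter.mp (hts hx)).1
          · have key : ∀ z ∈ t, G.Adj v z := fun z hz => (Finset.mem_filter.mp (hts hz)).2
            intro x hx y hy hxy
            rcases Finset.mem_insert.mp hx with h1 | h1 <;> rcases Finset.mem_insert.mp hy with h2 | h2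
            · exact absurd (h1.trans h2.symm) hxy
            · exact h1 ▸ key y h2
            · exact h2 ▸ (key x h1).symm
            · exact hta x h1 y h2 hxy
        · exact Or.inr ⟨t, fun x hx => Finset.mem_of_mem_erase (Finset.mem_filter.mp (hts hx)).1, htc, hta⟩
      · rcases ih (a+1) b B (by omega) hc with ⟨t, hts, htc, hta⟩ | ⟨t, hts, htc, hta⟩
        · exact Or.inl ⟨t, fun x hx => Finset.mem_of_mem_erase (Finset.mem_filter.mp (hts hx)).1, htc, hta⟩
        · right
          have hvt : v ∉ t := fun h => (Finset.mem_erase.mp ((Finset.mem_filter.mp (hts h)).1)).1 rfl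
          refine ⟨insert v t, ?_, by rw [Finset.card_insert_of_notMem hvt, htc], ?_⟩
          · intro x hx
            rcases Finset.mem_insert.mp hx with rfl | hx
            · exact hv
            · exact Finset.mem_of_mem_erase (Finset.mem_filter.mp (hts hx)).1
          · have key : ∀ z ∈ t, ¬ G.Adj v z := fun z hz => (Finset.mem_filter.mp (hts hz)).2
            intro x hx y hy hxy
            rcases Finset.mem_insert.mp hx with h1 | h1 <;> rcases Finset.mem_insert.mp hy with h2 | h2
            · exact absurd (h1.trans h2.symm) hxy
            · exact h1 ▸ key y h2
            · exact fun h => key x h1 ((h2 ▸ h : G.Adj x v).symm)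
            · exact hta x h1 y h2 hxy

lemma ramsey_finset (a b : ℕ) (s : Finset V) (h : ramr a b ≤ s.card) :
    (∃ t ⊆ s, t.card = a ∧ ∀ x ∈ t, ∀ y ∈ t, x ≠ y → G.Adj x y) ∨
    (∃ t ⊆ s, t.card = b ∧ ∀ x ∈ t, ∀ y ∈ t, x ≠ y → ¬ G.Adj x y) :=
  ramsey_main G (a+b) a b s rfl h

/-- Bipartite Ramsey halving lemma. -/
lemma br (k : ℕ) : ∀ A B : Finset V, k ≤ A.card →
    ∃ Ae An B', Ae ⊆ A ∧ An ⊆ A ∧ B' ⊆ B ∧ Disjoint Ae An ∧ Ae.card + An.card = k ∧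
      B.card ≤ 2 ^ k * B'.card ∧ (∀ a ∈ Ae, ∀ b ∈ B', G.Adj a b) ∧
      (∀ a ∈ An, ∀ b ∈ B', ¬ G.Adj a b) := by
  induction k with
  | zero =>
    intro A B _
    exact ⟨∅, ∅, B, by simp⟩
  | succ k ih =>
    intro A B hk
    obtain ⟨Ae, An, B', hAe, hAn, hB', hdisj, hcard, hBcard, he, hn⟩ := ih A B (by omega)
    have hU : (Ae ∪ An).card ≤ k := by
      calc (Ae ∪ An).card ≤ Ae.card + An.card := Finset.card_union_le _ _
      _ = k := hcard
    have : ∃ v ∈ A, v ∉ Ae ∪ An := by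
      by_contra h
      push_neg at h
      have : A ⊆ Ae ∪ An := h
      have := Finset.card_le_card this
      omega
    obtain ⟨v, hvA, hvU⟩ := this
    have hvAe : v ∉ Ae := fun h => hvU (Finset.mem_union_left _ h)
    have hvAn : v ∉ An := fun h => hvU (Finset.mem_union_right _ h)
    set Be := B'.filter (fun y => G.Adj v y) with hBe
    set Bn := B'.filter (fun y => ¬ G.Adj v y) with hBn
    have hsplit : Be.card + Bn.card = B'.card :=
      Finset.card_filter_add_card_filter_not (fun _ => G.Adj v _)
    rcases le_total Bn.card Be.card with hle | hle
    · refine ⟨insert v Ae, An, Be, ?_, hAn, (Finset.filter_subset _ _).trans hB',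
        ?_, ?_, ?_, ?_, ?_⟩
      · exact Finset.insert_subset hvA hAe
      · rw [Finset.disjoint_left]
        intro x hx
        rcases Finset.mem_insert.mp hx with rfl | hx
        · exact hvAn
        · exact Finset.disjoint_left.mp hdisj hx
      · rw [Finset.card_insert_of_notMem hvAe]; omega
      · calc B.card ≤ 2 ^ k * B'.card := hBcard
          _ ≤ 2 ^ k * (2 * Be.card) := by
              apply Nat.mul_le_mul_left; omega
          _ = 2 ^ (k+1) * Be.card := by ring
      · intro a ha b hb
        rcases Finset.mem_insert.mp ha with rfl | ha
        · exact (Finset.mem_filter.mp hb).2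
        · exact he a ha b (Finset.filter_subset _ _ hb)
      · intro a ha b hb
        exact hn a ha b (Finset.filter_subset _ _ hb)
    · refine ⟨Ae, insert v An, Bn, hAe, Finset.insert_subset hvA hAn,
        (Finset.filter_subset _ _).trans hB', ?_, ?_, ?_, ?_, ?_⟩
      · rw [Finset.disjoint_right]
        intro x hx
        rcases Finset.mem_insert.mp hx with rfl | hx
        · exact hvAe
        · exact Finset.disjoint_right.mp hdisj hx
      · rw [Finset.card_insert_of_notMem hvAn]; omega
      · calc B.card ≤ 2 ^ k * B'.card := hBcard
          _ ≤ 2 ^ k * (2 * Bn.card) := by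
              apply Nat.mul_le_mul_left; omega
          _ = 2 ^ (k+1) * Bn.card := by ring
      · intro a ha b hb
        exact he a ha b (Finset.filter_subset _ _ hb)
      · intro a ha b hb
        rcases Finset.mem_insert.mp ha with rfl | ha
        · exact (Finset.mem_filter.mp hb).2
        · exact hn a ha b (Finset.filter_subset _ _ hb)

/-- Greedy independent set in a bounded-degree symmetric irreflexive relation. -/
lemma greedy (R : V → V → Prop) [DecidableRel R] (hsymm : ∀ x y, R x y → R y x)
    (hirr : ∀ x, ¬ R x x) (c : ℕ) (u0 : Finset V)
    (hdeg : ∀ v ∈ u0, (u0.filter (fun w => R v w)).card ≤ c) :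
    ∀ (m : ℕ) (u : Finset V), u ⊆ u0 → m * (c + 1) ≤ u.card →
    ∃ T ⊆ u, T.card = m ∧ (∀ x ∈ T, ∀ y ∈ T, ¬ R x y) := by
  intro m
  induction m with
  | zero => intro u _ _; exact ⟨∅, by simp⟩
  | succ m ih =>
    intro u hu hcard
    have hpos : 0 < u.card := by
      have : 0 < (m + 1) * (c + 1) := by positivity
      omega
    obtain ⟨v, hv⟩ := Finset.card_pos.mp hpos
    set u' := u \ insert v (u.filter (fun w => R v w)) with hu'
    have hsub : u' ⊆ u := Finset.sdiff_subset
    have hcard' : m * (c + 1) ≤ u'.card := by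
      have h1 : (insert v (u.filter (fun w => R v w))).card ≤ c + 1 := by
        calc (insert v (u.filter (fun w => R v w))).card
            ≤ (u.filter (fun w => R v w)).card + 1 := Finset.card_insert_le _ _
          _ ≤ c + 1 := by
              have : (u.filter (fun w => R v w)).card ≤ (u0.filter (fun w => R v w)).card :=
                Finset.card_le_card (Finset.filter_subset_filter _ hu)
              have := hdeg v (hu hv)
              omega
      have h2 : u.card - (c + 1) ≤ u'.card := by
        have h3 := Finset.le_card_sdiff (insert v (u.filter (fun w => R v w))) u
        rw [← hu'] at h3
        omega
      have hexp : (m+1)*(c+1) = m*(c+1)+(c+1) := by ring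
      omega
    obtain ⟨T, hT, hTc, hTi⟩ := ih u' (hsub.trans hu) hcard'
    have hvT : v ∉ T := by
      intro h
      have := hT h
      rw [hu', Finset.mem_sdiff] at this
      exact this.2 (Finset.mem_insert_self _ _)
    refine ⟨insert v T, Finset.insert_subset hv (hT.trans hsub), by
      rw [Finset.card_insert_of_notMem hvT, hTc], ?_⟩
    intro x hx y hy
    have key : ∀ z ∈ T, ¬ R v z := by
      intro z hz hR
      have hzu' := hT hz
      rw [hu', Finset.mem_sdiff] at hzu'
      exact hzu'.2 (Finset.mem_insert_of_mem (Finset.mem_filter.mpr ⟨hsub (hT hz), hR⟩))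
    rcases Finset.mem_insert.mp hx with h1 | h1 <;> rcases Finset.mem_insert.mp hy with h2 | h2
    · exact h1 ▸ h2 ▸ hirr v
    · exact h1 ▸ key y h2
    · exact fun h => key x h1 (h2 ▸ hsymm x y h)
    · exact hTi x h1 y h2


def Sfun (r : ℕ) : ℕ → ℕ
  | 0 => r
  | m+1 => Sfun r m * 2 ^ (r + Sfun r m) + (r + Sfun r m)

lemma Sfun_ge (r m : ℕ) : r ≤ Sfun r m := by
  induction m with
  | zero => simp [Sfun]
  | succ m ih => simp only [Sfun]; omega

lemma Sfun_mono (r m : ℕ) : Sfun r m ≤ Sfun r (m+1) := by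
  simp only [Sfun]; omega

lemma cascade (n r : ℕ) : ∀ (m : ℕ) (P : Fin n → Finset V),
    (∀ i, Sfun r m ≤ (P i).card) →
    ((Finset.univ.filter (fun ij : Fin n × Fin n =>
        ij.1 < ij.2 ∧ ∃ a ∈ P ij.1, ∃ b ∈ P ij.2, G.Adj a b)).card ≤ m) →
    (∃ P' : Fin n → Finset V, (∀ i, P' i ⊆ P i) ∧ (∀ i, r ≤ (P' i).card) ∧
        (∀ i j, i ≠ j → ∀ a ∈ P' i, ∀ b ∈ P' j, ¬ G.Adj a b)) ∨
    (∃ A B : Finset V, A.card = r ∧ B.card = r ∧ (∀ a ∈ A, ∀ b ∈ B, G.Adj a b)) := by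
  intro m
  induction m with
  | zero =>
    intro P hcard hbad
    left
    refine ⟨P, fun i => Finset.Subset.refl _, fun i => hcard i, ?_⟩
    have hbs : (Finset.univ.filter (fun ij : Fin n × Fin n =>
        ij.1 < ij.2 ∧ ∃ a ∈ P ij.1, ∃ b ∈ P ij.2, G.Adj a b)) = ∅ :=
      Finset.card_eq_zero.mp (Nat.le_zero.mp hbad)
    have hno : ∀ i j, i < j → ∀ a ∈ P i, ∀ b ∈ P j, ¬ G.Adj a b := by
      intro i j hij a ha b hb hadj
      have : (i,j) ∈ (Finset.univ.filter (fun ij : Fin n × Fin n =>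
          ij.1 < ij.2 ∧ ∃ a ∈ P ij.1, ∃ b ∈ P ij.2, G.Adj a b)) :=
        Finset.mem_filter.mpr ⟨Finset.mem_univ _, hij, a, ha, b, hb, hadj⟩
      rw [hbs] at this
      exact absurd this (Finset.notMem_empty _)
    intro i j hij a ha b hb hadj
    rcases lt_or_gt_of_ne hij with h | h
    · exact hno i j h a ha b hb hadj
    · exact hno j i h b hb a ha hadj.symm
  | succ m ih =>
    intro P hcard hbad
    set bs := (Finset.univ.filter (fun ij : Fin n × Fin n =>
        ij.1 < ij.2 ∧ ∃ a ∈ P ij.1, ∃ b ∈ P ij.2, G.Adj a b)) with hbsdef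
    by_cases hbs : bs = ∅
    · left
      refine ⟨P, fun i => Finset.Subset.refl _,
        fun i => le_trans (Sfun_ge r (m+1)) (hcard i), ?_⟩
      have hno : ∀ i j, i < j → ∀ a ∈ P i, ∀ b ∈ P j, ¬ G.Adj a b := by
        intro i j hij a ha b hb hadj
        have hmem : (i,j) ∈ bs :=
          Finset.mem_filter.mpr ⟨Finset.mem_univ _, hij, a, ha, b, hb, hadj⟩
        rw [hbs] at hmem
        exact absurd hmem (Finset.notMem_empty _)
      intro i j hij a ha b hb hadj
      rcases lt_or_gt_of_ne hij with h | h
      · exact hno i j h a ha b hb hadj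
      · exact hno j i h b hb a ha hadj.symm
    · obtain ⟨⟨i, j⟩, hij⟩ := Finset.nonempty_of_ne_empty hbs
      have hijmem := Finset.mem_filter.mp hij
      have hlt : i < j := hijmem.2.1
      have hne : i ≠ j := ne_of_lt hlt
      have hne' : j ≠ i := Ne.symm hne
      set k := r + Sfun r m with hk
      have hAcard : k ≤ (P i).card := by
        have := hcard i
        have h2 : k ≤ Sfun r (m+1) := by simp only [Sfun]; omega
        omega
      obtain ⟨Ae, An, B', hAe, hAn, hB', hdisj, hsum, hBc, he, hnadj⟩ := br G k (P i) (P j) hAcard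
      have hBcard : Sfun r m ≤ B'.card := by
        have h1 : Sfun r m * 2 ^ k ≤ (P j).card := by
          have := hcard j
          have : Sfun r m * 2 ^ k ≤ Sfun r (m+1) := by simp only [Sfun, hk]; omega
          omega
        have h2 : Sfun r m * 2 ^ k ≤ 2 ^ k * B'.card := le_trans h1 hBc
        rw [Nat.mul_comm (Sfun r m)] at h2
        exact Nat.le_of_mul_le_mul_left h2 (Nat.pow_pos (n := k) (by norm_num))
      by_cases hcase : r ≤ Ae.card
      · right
        obtain ⟨A0, hA0, hA0c⟩ := Finset.exists_subset_card_eq hcase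
        obtain ⟨B0, hB0, hB0c⟩ := Finset.exists_subset_card_eq (s := B') (n := r)
          (le_trans (Sfun_ge r m) hBcard)
        exact ⟨A0, B0, hA0c, hB0c, fun a ha b hb => he a (hA0 ha) b (hB0 hb)⟩
      · have hAncard : Sfun r m ≤ An.card := by omega
        set newP : Fin n → Finset V := fun t => if t = i then An else if t = j then B' else P t
          with hnewP
        have hsub : ∀ t, newP t ⊆ P t := by
          intro t
          simp only [hnewP]
          by_cases h1 : t = i
          · simp only [h1, if_pos rfl]; exact hAn
          · by_cases h2 : t = j
            · simp only [h1, h2, if_neg hne', if_pos rfl]; exact hB'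
            · simp [h1, h2]
        have hcard' : ∀ t, Sfun r m ≤ (newP t).card := by
          intro t
          simp only [hnewP]
          by_cases h1 : t = i
          · simp only [h1, if_pos rfl]; exact hAncard
          · by_cases h2 : t = j
            · simp only [h1, h2, if_neg hne', if_pos rfl]; exact hBcard
            · simp [h1, h2]
              exact le_trans (Sfun_mono r m) (hcard t)
        have hbad' : (Finset.univ.filter (fun ij : Fin n × Fin n =>
            ij.1 < ij.2 ∧ ∃ a ∈ newP ij.1, ∃ b ∈ newP ij.2, G.Adj a b)).card ≤ m := by
          have hsubbs : (Finset.univ.filter (fun ij : Fin n × Fin n =>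
              ij.1 < ij.2 ∧ ∃ a ∈ newP ij.1, ∃ b ∈ newP ij.2, G.Adj a b)) ⊆ bs.erase (i, j) := by
            intro x hx
            have hx' := Finset.mem_filter.mp hx
            obtain ⟨hxu, hxlt, a, ha, b, hb, hab⟩ := hx'
            refine Finset.mem_erase.mpr ⟨?_, Finset.mem_filter.mpr
              ⟨Finset.mem_univ _, hxlt, a, hsub _ ha, b, hsub _ hb, hab⟩⟩
            intro hxij
            rw [hxij] at ha hb
            have hai : a ∈ An := by simpa [hnewP] using ha
            have hbj : b ∈ B' := by simpa [hnewP, hne'] using hb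
            exact hnadj a hai b hbj hab
          have h1 := Finset.card_le_card hsubbs
          have h2 : (bs.erase (i,j)).card = bs.card - 1 := Finset.card_erase_of_mem hij
          omega
        rcases ih newP hcard' hbad' with ⟨P'', h1, h2, h3⟩ | hres
        · exact Or.inl ⟨P'', fun t => (h1 t).trans (hsub t), h2, h3⟩
        · exact Or.inr hres



lemma clique_embedding {n : ℕ} (f : Fin n → V) (hinj : Function.Injective f)
    (hadj : ∀ i j, i ≠ j → G.Adj (f i) (f j)) :
    Nonempty ((⊤ : SimpleGraph (Fin n)) ↪g G) := by
  refine ⟨⟨⟨f, hinj⟩, ?_⟩⟩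
  intro i j
  simp only [Function.Embedding.coeFn_mk, top_adj]
  constructor
  · intro h he
    exact G.irrefl (he ▸ h)
  · exact hadj i j

lemma bipartite_embedding {n : ℕ} (fA fB : Fin n → V)
    (hAinj : Function.Injective fA) (hBinj : Function.Injective fB)
    (hABne : ∀ i j, fA i ≠ fB j)
    (hAind : ∀ i j, ¬ G.Adj (fA i) (fA j))
    (hBind : ∀ i j, ¬ G.Adj (fB i) (fB j))
    (hcross : ∀ i j, G.Adj (fA i) (fB j)) :
    Nonempty (completeBipartiteGraph (Fin n) (Fin n) ↪g G) := by
  have hinj : Function.Injective (Sum.elim fA fB) := by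
    intro x y h
    rcases x with x | x <;> rcases y with y | y <;> simp only [Sum.elim_inl, Sum.elim_inr] at h
    · rw [hAinj h]
    · exact absurd h (hABne x y)
    · exact absurd h.symm (hABne y x)
    · rw [hBinj h]
  refine ⟨⟨⟨Sum.elim fA fB, hinj⟩, ?_⟩⟩
  intro a b
  rcases a with a | a <;> rcases b with b | b <;>
    simp only [Function.Embedding.coeFn_mk, Sum.elim_inl, Sum.elim_inr,
      completeBipartiteGraph] <;> simp
  · exact hAind a b
  · exact hcross a b
  · exact (hcross b a).symm
  · exact hBind a b

lemma starforest_embedding {n : ℕ} (c : Fin n → V) (l : Fin n → Fin n → V)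
    (hcinj : Function.Injective c)
    (hlinj : ∀ i, Function.Injective (l i))
    (hcl : ∀ i j k, c i ≠ l j k)
    (hldisj : ∀ i j k k', i ≠ j → l i k ≠ l j k')
    (hadj : ∀ i k, G.Adj (c i) (l i k))
    (hcc : ∀ i j, ¬ G.Adj (c i) (c j))
    (hcl2 : ∀ i j k, i ≠ j → ¬ G.Adj (c i) (l j k))
    (hll : ∀ i j k k', ¬ G.Adj (l i k) (l j k')) :
    Nonempty (starForest n ↪g G) := by
  set F : Fin n × Fin (n + 1) → V :=
    fun p => if h : p.2 = 0 then c p.1 else l p.1 (p.2.pred h) with hF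
  have hF0 : ∀ (i : Fin n), F (i, 0) = c i := by intro i; simp [hF]
  have hFs : ∀ (i : Fin n) (x : Fin (n+1)) (h : x ≠ 0), F (i, x) = l i (x.pred h) := by
    intro i x h; simp [hF, h]
  have hinj : Function.Injective F := by
    rintro ⟨i, x⟩ ⟨j, y⟩ h
    by_cases hx : x = 0 <;> by_cases hy : y = 0
    · subst hx; subst hy
      rw [hF0, hF0] at h
      rw [hcinj h]
    · subst hx
      rw [hF0, hFs j y hy] at h
      exact absurd h (hcl i j _)
    · subst hy
      rw [hFs i x hx, hF0] at h
      exact absurd h.symm (hcl j i _)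
    · rw [hFs i x hx, hFs j y hy] at h
      have hij : i = j := by
        by_contra hij
        exact hldisj i j _ _ hij h
      subst hij
      have := hlinj i h
      have : x = y := by
        have := congrArg Fin.succ this
        rwa [Fin.succ_pred, Fin.succ_pred] at this
      rw [this]
  refine ⟨⟨⟨F, hinj⟩, ?_⟩⟩
  rintro ⟨i, x⟩ ⟨j, y⟩
  simp only [Function.Embedding.coeFn_mk]
  have hstar : (starForest n).Adj (i, x) (j, y) ↔
      ((i, x) ≠ (j, y) ∧ ((i = j ∧ x = 0 ∧ y ≠ 0) ∨ (j = i ∧ y = 0 ∧ x ≠ 0))) := by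
    simp [starForest, SimpleGraph.fromRel_adj]
  rw [hstar]
  by_cases hx : x = 0 <;> by_cases hy : y = 0
  · subst hx; subst hy
    rw [hF0, hF0]
    constructor
    · intro h; exact absurd h (hcc i j)
    · rintro ⟨hne, ⟨rfl, _, h0⟩ | ⟨rfl, _, h0⟩⟩ <;> exact absurd rfl h0
  · subst hx
    rw [hF0, hFs j y hy]
    constructor
    · intro h
      have hij : i = j := by
        by_contra hij
        exact hcl2 i j _ hij h
      subst hij
      exact ⟨by simp [Ne.symm hy], Or.inl ⟨rfl, rfl, hy⟩⟩
    · rintro ⟨hne, ⟨rfl, _, _⟩ | ⟨rfl, h0, _⟩⟩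
      · exact hadj i _
      · exact absurd h0 hy
  · subst hy
    rw [hFs i x hx, hF0]
    constructor
    · intro h
      have hij : j = i := by
        by_contra hij
        exact hcl2 j i _ hij h.symm
      subst hij
      exact ⟨by simp [hx], Or.inr ⟨rfl, rfl, hx⟩⟩
    · rintro ⟨hne, ⟨rfl, h0, _⟩ | ⟨rfl, _, _⟩⟩
      · exact absurd h0 hx
      · exact (hadj _ _).symm
  · rw [hFs i x hx, hFs j y hy]
    constructor
    · intro h; exact absurd h (hll _ _ _ _)
    · rintro ⟨hne, ⟨rfl, h0, _⟩ | ⟨rfl, h0, _⟩⟩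
      · exact absurd h0 hx
      · exact absurd h0 hy


lemma one_le_ramr (a b : ℕ) (ha : 1 ≤ a) (hb : 1 ≤ b) : 1 ≤ ramr a b := by
  match a, b, ha, hb with
  | a+1, b+1, _, _ => simp [ramr]

end Statement19

open Statement19

/-- For every `n ≥ 1` there is `d` such that every graph with at least `d` vertices of
degree at least `d` (i.e. of h-index at least `d`) contains a clique of size `n`, an
induced `K_{n,n}`, or an induced `nK_{1,n}`. -/
theorem statement19 (n : ℕ) (hn : 1 ≤ n) :
    ∃ d : ℕ, ∀ (V : Type) [Fintype V] (G : SimpleGraph V),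
      d ≤ {v : V | d ≤ (G.neighborSet v).ncard}.ncard →
      (Nonempty ((⊤ : SimpleGraph (Fin n)) ↪g G) ∨
        Nonempty (completeBipartiteGraph (Fin n) (Fin n) ↪g G) ∨
        Nonempty (starForest n ↪g G)) := by
  classical
  set r := ramr n n with hrdef
  have hr1 : 1 ≤ r := hrdef ▸ one_le_ramr n n hn hn
  set N := 10*n^2 + 10*n + 10 with hNdef
  set Q := r * Nat.choose N n with hQdef
  set M := n * n with hMdef
  set d := ramr n N + Q + 2 ^ N * Sfun r M + 1 with hddef
  refine ⟨d, ?_⟩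
  intro V _ G hncard
  letI : DecidableEq V := Classical.decEq V
  letI : DecidableRel G.Adj := Classical.decRel _
  -- the set of high-degree vertices
  have hfin : {v : V | d ≤ (G.neighborSet v).ncard}.Finite := Set.toFinite _
  set H : Finset V := hfin.toFinset with hHdef
  have hHcard : d ≤ H.card := by
    rwa [Set.ncard_eq_toFinset_card _ hfin] at hncard
  have hdeg : ∀ v ∈ H, d ≤ (G.neighborFinset v).card := by
    intro v hv
    rw [hHdef, Set.Finite.mem_toFinset] at hv
    rwa [neighborFinset_def, ← Set.ncard_eq_toFinset_card']
  -- Case 1 : a clique of size n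
  by_cases hclq : ∃ t : Finset V, t.card = n ∧ ∀ x ∈ t, ∀ y ∈ t, x ≠ y → G.Adj x y
  · left
    obtain ⟨t, htc, hta⟩ := hclq
    let e := t.equivFinOfCardEq htc
    refine clique_embedding G (fun i => (e.symm i : V)) ?_ ?_
    · intro i j h
      have : e.symm i = e.symm j := Subtype.ext h
      simpa using congrArg e this
    · intro i j hij
      refine hta _ (e.symm i).2 _ (e.symm j).2 ?_
      intro h
      exact hij (by simpa using congrArg e (Subtype.ext h))
  -- from now on, no clique: every big set contains a big independent set
  have indep_of_big : ∀ (b : ℕ) (s : Finset V), ramr n b ≤ s.card →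
      ∃ t ⊆ s, t.card = b ∧ ∀ x ∈ t, ∀ y ∈ t, x ≠ y → ¬ G.Adj x y := by
    intro b s hs
    rcases ramsey_finset G n b s hs with ⟨t, _, htc, hta⟩ | h
    · exact absurd ⟨t, htc, hta⟩ hclq
    · exact h
  -- the independent set of candidate centers
  obtain ⟨C, hCH, hCcard, hCind⟩ := indep_of_big N H (by omega)
  -- vertices adjacent to at least n centers
  set Bad := Finset.univ.filter (fun y : V => n ≤ (C.filter (fun x => G.Adj x y)).card)
    with hBaddef
  -- Case 2 : some independent n-subset of C has at least r common neighbours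
  by_cases hknn : ∃ T ⊆ C, T.card = n ∧
      r ≤ (Finset.univ.filter (fun y : V => ∀ x ∈ T, G.Adj x y)).card
  · right; left
    obtain ⟨T, hTC, hTc, hTW⟩ := hknn
    set W := Finset.univ.filter (fun y : V => ∀ x ∈ T, G.Adj x y) with hWdef
    obtain ⟨B, hBW, hBc, hBind⟩ := indep_of_big n W hTW
    have hcrossTB : ∀ a ∈ T, ∀ b ∈ B, G.Adj a b := by
      intro a ha b hb
      exact (Finset.mem_filter.mp (hBW hb)).2 a ha
    let eA := T.equivFinOfCardEq hTc
    let eB := B.equivFinOfCardEq hBc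
    refine bipartite_embedding G (fun i => (eA.symm i : V)) (fun i => (eB.symm i : V))
      ?_ ?_ ?_ ?_ ?_ ?_
    · intro i j h
      have : eA.symm i = eA.symm j := Subtype.ext h
      simpa using congrArg eA this
    · intro i j h
      have : eB.symm i = eB.symm j := Subtype.ext h
      simpa using congrArg eB this
    · intro i j
      exact G.ne_of_adj (hcrossTB _ (eA.symm i).2 _ (eB.symm j).2)
    · intro i j hadj
      by_cases hij : i = j
      · subst hij; exact G.irrefl hadj
      · exact hCind _ (hTC (eA.symm i).2) _ (hTC (eA.symm j).2)
          (fun h => hij (by simpa using congrArg eA (Subtype.ext h))) hadj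
    · intro i j hadj
      by_cases hij : i = j
      · subst hij; exact G.irrefl hadj
      · exact hBind _ (eB.symm i).2 _ (eB.symm j).2
          (fun h => hij (by simpa using congrArg eB (Subtype.ext h))) hadj
    · intro i j
      exact hcrossTB _ (eA.symm i).2 _ (eB.symm j).2
  -- no such subset : Bad is small
  · push_neg at hknn
    have hBadcard : Bad.card ≤ Q := by
      have hf : ∀ y : V, ∃ T : Finset V, y ∈ Bad →
          (T ⊆ C.filter (fun x => G.Adj x y) ∧ T.card = n) := by
        intro y
        by_cases hy : y ∈ Bad
        · obtain ⟨T, hT1, hT2⟩ :=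
            Finset.exists_subset_card_eq ((Finset.mem_filter.mp hy).2)
          exact ⟨T, fun _ => ⟨hT1, hT2⟩⟩
        · exact ⟨∅, fun h => absurd h hy⟩
      choose f hfspec using hf
      have key : Bad.card ≤ r * (Bad.image f).card := by
        refine Finset.card_le_mul_card_image Bad r ?_
        intro a ha
        obtain ⟨y₀, hy₀, rfl⟩ := Finset.mem_image.mp ha
        have hfa := hfspec y₀ hy₀
        have hsubC : f y₀ ⊆ C := hfa.1.trans (Finset.filter_subset _ _)
        have hlt := hknn (f y₀) hsubC hfa.2
        refine le_trans (Finset.card_le_card ?_) (le_of_lt hlt)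
        intro y hy
        have hy' := Finset.mem_filter.mp hy
        refine Finset.mem_filter.mpr ⟨Finset.mem_univ _, ?_⟩
        intro x hx
        rw [← hy'.2] at hx
        exact (Finset.mem_filter.mp ((hfspec y hy'.1).1 hx)).2
      have himg : (Bad.image f).card ≤ Nat.choose N n := by
        have hsub : Bad.image f ⊆ Finset.powersetCard n C := by
          intro a ha
          obtain ⟨y₀, hy₀, rfl⟩ := Finset.mem_image.mp ha
          have hfa := hfspec y₀ hy₀
          exact Finset.mem_powersetCard.mpr
            ⟨hfa.1.trans (Finset.filter_subset _ _), hfa.2⟩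
        calc (Bad.image f).card ≤ (Finset.powersetCard n C).card := Finset.card_le_card hsub
          _ = Nat.choose N n := by rw [Finset.card_powersetCard, hCcard]
      calc Bad.card ≤ r * (Bad.image f).card := key
        _ ≤ r * Nat.choose N n := Nat.mul_le_mul_left r himg
        _ = Q := hQdef.symm
    -- choose the base pools
    have hDw : ∀ w : V, ∃ Dw : Finset V, w ∈ C →
        (Dw ⊆ G.neighborFinset w \ Bad ∧ Dw.card = d - Q) := by
      intro w
      by_cases hw : w ∈ C
      · have h1 : d - Q ≤ (G.neighborFinset w \ Bad).card := by
          have h2 := hdeg w (hCH hw)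
          have h3 := Finset.le_card_sdiff Bad (G.neighborFinset w)
          omega
        obtain ⟨Dw, hDw1, hDw2⟩ := Finset.exists_subset_card_eq h1
        exact ⟨Dw, fun _ => ⟨hDw1, hDw2⟩⟩
      · exact ⟨∅, fun h => absurd h hw⟩
    choose Dn hDn using hDw
    -- bipartite Ramsey per center
    have hbrw : ∀ w : V, ∃ Cew Cnw P1w : Finset V, Cew ⊆ C.erase w ∧
        (w ∈ C → (Cnw ⊆ C.erase w ∧ P1w ⊆ Dn w ∧ Disjoint Cew Cnw ∧
         Cew.card + Cnw.card = N - 1 ∧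
         (Dn w).card ≤ 2 ^ (N-1) * P1w.card ∧
         (∀ a ∈ Cew, ∀ b ∈ P1w, G.Adj a b) ∧
         (∀ a ∈ Cnw, ∀ b ∈ P1w, ¬ G.Adj a b))) := by
      intro w
      by_cases hw : w ∈ C
      · have hk : N - 1 ≤ (C.erase w).card := by
          rw [Finset.card_erase_of_mem hw, hCcard]
        obtain ⟨Ae, An, B', h1, h2, h3, h4, h5, h6, h7, h8⟩ :=
          br G (N-1) (C.erase w) (Dn w) hk
        exact ⟨Ae, An, B', h1, fun _ => ⟨h2, h3, h4, h5, h6, h7, h8⟩⟩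
      · exact ⟨∅, ∅, ∅, by simp, fun h => absurd h hw⟩
    choose Ce Cn P1 hCe0 hbrspec using hbrw
    -- pool sizes
    have hP1card : ∀ w ∈ C, Sfun r M ≤ (P1 w).card := by
      intro w hw
      obtain ⟨_, _, _, _, h6, _, _⟩ := hbrspec w hw
      have hdq : 2 ^ (N-1) * Sfun r M ≤ (Dn w).card := by
        have h2 := (hDn w hw).2
        have hpow : 2^(N-1) * Sfun r M ≤ 2^N * Sfun r M :=
          Nat.mul_le_mul_right _ (Nat.pow_le_pow_right (by norm_num) (by omega))
        omega
      exact Nat.le_of_mul_le_mul_left (le_trans hdq h6) (Nat.pow_pos (by norm_num))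
    -- partition of the other centers
    have hpart : ∀ w ∈ C, Ce w ∪ Cn w = C.erase w := by
      intro w hw
      obtain ⟨h2, _, h4, h5, _, _, _⟩ := hbrspec w hw
      refine Finset.eq_of_subset_of_card_le (Finset.union_subset (hCe0 w) h2) ?_
      rw [Finset.card_union_of_disjoint h4, Finset.card_erase_of_mem hw, hCcard, h5]
    -- each Ce is small
    have hCesmall : ∀ w ∈ C, (Ce w).card ≤ n - 1 := by
      intro w hw
      obtain ⟨_, h3, _, _, _, h7, _⟩ := hbrspec w hw
      have hP1pos : 0 < (P1 w).card := by
        have h1 := hP1card w hw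
        have h2 := Sfun_ge r M
        omega
      obtain ⟨y, hy⟩ := Finset.card_pos.mp hP1pos
      have hynb : y ∈ G.neighborFinset w \ Bad := (hDn w hw).1 (h3 hy)
      have hyBad : y ∉ Bad := (Finset.mem_sdiff.mp hynb).2
      have hylt : (C.filter (fun x => G.Adj x y)).card < n := by
        by_contra hcon
        exact hyBad (Finset.mem_filter.mpr ⟨Finset.mem_univ _, by omega⟩)
      have hsub : Ce w ⊆ C.filter (fun x => G.Adj x y) := by
        intro x hx
        exact Finset.mem_filter.mpr
          ⟨Finset.mem_of_mem_erase (hCe0 w hx), h7 x hx y hy⟩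
      have := Finset.card_le_card hsub
      omega
    -- the conflict relation on C
    set Rbad : V → V → Prop := fun w w' => w' ∈ Ce w ∨ w ∈ Ce w' with hRbaddef
    have hRsymm : ∀ x y, Rbad x y → Rbad y x := fun x y h => h.symm
    have hRirr : ∀ x, ¬ Rbad x x := by
      intro x h
      rcases h with h | h <;> exact (Finset.mem_erase.mp (hCe0 x h)).1 rfl
    -- counting : total in-degree is small
    have hsum : (∑ w ∈ C, (C.filter (fun w' => w ∈ Ce w')).card) ≤ N * (n-1) := by
      have hswap : (∑ w ∈ C, (C.filter (fun w' => w ∈ Ce w')).card)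
          = ∑ w' ∈ C, (C.filter (fun w => w ∈ Ce w')).card := by
        simp only [Finset.card_filter]
        rw [Finset.sum_comm]
      rw [hswap]
      calc ∑ w' ∈ C, (C.filter (fun w => w ∈ Ce w')).card
          ≤ ∑ w' ∈ C, (n-1) := by
            refine Finset.sum_le_sum ?_
            intro w' hw'
            refine le_trans (Finset.card_le_card ?_) (hCesmall w' hw')
            intro x hx
            exact (Finset.mem_filter.mp hx).2
        _ = N * (n-1) := by rw [Finset.sum_const, hCcard, smul_eq_mul]
    set Low := C.filter (fun w => (C.filter (fun w' => w ∈ Ce w')).card ≤ 2*n) with hLowdef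
    have hLowcard : 3 * n^2 ≤ Low.card := by
      have hCL : (C \ Low).card * (2*n+1) ≤ N * (n-1) := by
        have h1 : ∀ w ∈ C \ Low, 2*n+1 ≤ (C.filter (fun w' => w ∈ Ce w')).card := by
          intro w hw
          have hw' := Finset.mem_sdiff.mp hw
          have h2 : ¬ ((C.filter (fun w' => w ∈ Ce w')).card ≤ 2*n) := by
            intro hcon
            exact hw'.2 (Finset.mem_filter.mpr ⟨hw'.1, hcon⟩)
          omega
        calc (C \ Low).card * (2*n+1)
            ≤ ∑ w ∈ C \ Low, (C.filter (fun w' => w ∈ Ce w')).card := by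
              simpa using Finset.card_nsmul_le_sum (C \ Low) _ (2*n+1) h1
          _ ≤ ∑ w ∈ C, (C.filter (fun w' => w ∈ Ce w')).card :=
              Finset.sum_le_sum_of_subset Finset.sdiff_subset
          _ ≤ N * (n-1) := hsum
      have hLsub : Low ⊆ C := Finset.filter_subset _ _
      have hsplit : Low.card + (C \ Low).card = N := by
        rw [Finset.card_sdiff_of_subset hLsub, hCcard]
        have := Finset.card_le_card hLsub
        rw [hCcard] at this
        omega
      obtain ⟨k, hk⟩ : ∃ k, n = k + 1 := ⟨n-1, by omega⟩
      subst hk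
      have hn1 : k + 1 - 1 = k := by omega
      rw [hn1] at hCL
      nlinarith [hCL, hsplit, sq_nonneg k]
    -- greedy independent set in the conflict graph
    have hdegbound : ∀ v ∈ Low, (Low.filter (fun w => Rbad v w)).card ≤ 3*n - 1 := by
      intro v hv
      have hv' := Finset.mem_filter.mp hv
      have hsub : Low.filter (fun w => Rbad v w) ⊆
          Ce v ∪ C.filter (fun w' => v ∈ Ce w') := by
        intro x hx
        have hx' := Finset.mem_filter.mp hx
        rcases hx'.2 with h | h
        · exact Finset.mem_union_left _ h
        · exact Finset.mem_union_right _
            (Finset.mem_filter.mpr ⟨(Finset.filter_subset _ _) hx'.1, h⟩)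
      have h1 := Finset.card_le_card hsub
      have h2 := Finset.card_union_le (Ce v) (C.filter (fun w' => v ∈ Ce w'))
      have h3 := hCesmall v hv'.1
      have h4 := hv'.2
      omega
    obtain ⟨T, hTLow, hTcard, hTgood⟩ := greedy Rbad hRsymm hRirr (3*n-1) Low hdegbound
      n Low (Finset.Subset.refl _)
      (by
        have e1 : 3*n - 1 + 1 = 3*n := by omega
        rw [e1]
        have e2 : n*(3*n) = 3*n^2 := by ring
        omega)
    have hTC' : T ⊆ C := hTLow.trans (Finset.filter_subset _ _)
    have hgood : ∀ w ∈ T, ∀ w' ∈ T, w ≠ w' → w' ∈ Cn w := by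
      intro w hw w' hw' hne
      have h1 : w' ∈ C.erase w := Finset.mem_erase.mpr ⟨Ne.symm hne, hTC' hw'⟩
      rw [← hpart w (hTC' hw)] at h1
      rcases Finset.mem_union.mp h1 with h | h
      · exact absurd (Or.inl h) (hTgood w hw w' hw')
      · exact h
    -- enumerate the chosen centers
    let eT := T.equivFinOfCardEq hTcard
    set c : Fin n → V := fun i => (eT.symm i : V) with hcdef
    have hcmemT : ∀ i, c i ∈ T := fun i => (eT.symm i).2
    have hcmem : ∀ i, c i ∈ C := fun i => hTC' (hcmemT i)
    have hcinj : Function.Injective c := by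
      intro i j h
      have : eT.symm i = eT.symm j := Subtype.ext h
      simpa using congrArg eT this
    have hcne : ∀ i j : Fin n, i ≠ j → c i ≠ c j := fun i j hij h => hij (hcinj h)
    set P : Fin n → Finset V := fun i => P1 (c i) with hPdef
    have hPadj : ∀ i, ∀ y ∈ P i, G.Adj (c i) y := by
      intro i y hy
      have h3 := (hbrspec (c i) (hcmem i)).2.1
      have h4 := (hDn (c i) (hcmem i)).1 (h3 hy)
      exact (SimpleGraph.mem_neighborFinset _ _ _).mp (Finset.mem_sdiff.mp h4).1
    have hPnadj : ∀ i j : Fin n, i ≠ j → ∀ y ∈ P j, ¬ G.Adj (c i) y := by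
      intro i j hij y hy
      have hmem : c i ∈ Cn (c j) :=
        hgood (c j) (hcmemT j) (c i) (hcmemT i) (hcne j i (Ne.symm hij))
      exact (hbrspec (c j) (hcmem j)).2.2.2.2.2.2 (c i) hmem y hy
    have hPcard : ∀ i, Sfun r M ≤ (P i).card := fun i => hP1card (c i) (hcmem i)
    have hbadM : (Finset.univ.filter (fun ij : Fin n × Fin n =>
        ij.1 < ij.2 ∧ ∃ a ∈ P ij.1, ∃ b ∈ P ij.2, G.Adj a b)).card ≤ M := by
      calc (Finset.univ.filter (fun ij : Fin n × Fin n =>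
            ij.1 < ij.2 ∧ ∃ a ∈ P ij.1, ∃ b ∈ P ij.2, G.Adj a b)).card
          ≤ (Finset.univ : Finset (Fin n × Fin n)).card :=
            Finset.card_le_card (Finset.filter_subset _ _)
        _ = M := by simp [hMdef]
    rcases cascade G n r M P hPcard hbadM with
      ⟨P', hP'sub, hP'card, hP'cross⟩ | ⟨A, B, hAc, hBc, hABadj⟩
    · -- build the star forest
      right; right
      have hleaf : ∀ i : Fin n, ∃ L, L ⊆ P' i ∧ L.card = n ∧
          ∀ x ∈ L, ∀ y ∈ L, x ≠ y → ¬ G.Adj x y := by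
        intro i
        obtain ⟨L, h1, h2, h3⟩ := indep_of_big n (P' i) (hP'card i)
        exact ⟨L, h1, h2, h3⟩
      choose L hLsub hLcard hLind using hleaf
      set l : Fin n → Fin n → V :=
        fun i k => (((L i).equivFinOfCardEq (hLcard i)).symm k : V) with hldef
      have hlmemL : ∀ i k, l i k ∈ L i :=
        fun i k => (((L i).equivFinOfCardEq (hLcard i)).symm k).2
      have hlmemP' : ∀ i k, l i k ∈ P' i := fun i k => hLsub i (hlmemL i k)
      have hlmem : ∀ i k, l i k ∈ P i := fun i k => hP'sub i (hlmemP' i k)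
      have hlinj : ∀ i, Function.Injective (l i) := by
        intro i k k' h
        have : ((L i).equivFinOfCardEq (hLcard i)).symm k
            = ((L i).equivFinOfCardEq (hLcard i)).symm k' := Subtype.ext h
        simpa using congrArg ((L i).equivFinOfCardEq (hLcard i)) this
      refine starforest_embedding G c l hcinj hlinj ?_ ?_ ?_ ?_ ?_ ?_
      · intro i j k h
        by_cases hij : i = j
        · subst hij
          exact G.irrefl (h ▸ hPadj i (l i k) (hlmem i k))
        · have hadj := hPadj j (l j k) (hlmem j k)
          rw [← h] at hadj
          exact hCind (c j) (hcmem j) (c i) (hcmem i) (hcne j i (Ne.symm hij)) hadj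
      · intro i j k k' hij h
        have h1 := hPadj i (l i k) (hlmem i k)
        rw [h] at h1
        exact hPnadj i j hij (l j k') (hlmem j k') h1
      · intro i k
        exact hPadj i _ (hlmem i k)
      · intro i j hadj
        by_cases hij : i = j
        · subst hij; exact G.irrefl hadj
        · exact hCind _ (hcmem i) _ (hcmem j) (hcne i j hij) hadj
      · intro i j k hij
        exact hPnadj i j hij _ (hlmem j k)
      · intro i j k k' hadj
        by_cases hij : i = j
        · subst hij
          by_cases hkk : l i k = l i k'
          · exact G.irrefl (hkk ▸ hadj)
          · exact hLind i _ (hlmemL i k) _ (hlmemL i k') hkk hadj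
        · exact hP'cross i j hij _ (hlmemP' i k) _ (hlmemP' j k') hadj
    · -- induced K_{n,n} from the complete pair
      right; left
      obtain ⟨A', hA'A, hA'c, hA'ind⟩ := indep_of_big n A hAc.ge
      obtain ⟨B', hB'B, hB'c, hB'ind⟩ := indep_of_big n B hBc.ge
      have hcross' : ∀ a ∈ A', ∀ b ∈ B', G.Adj a b :=
        fun a ha b hb => hABadj a (hA'A ha) b (hB'B hb)
      let eA := A'.equivFinOfCardEq hA'c
      let eB := B'.equivFinOfCardEq hB'c
      refine bipartite_embedding G (fun i => (eA.symm i : V)) (fun i => (eB.symm i : V))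
        ?_ ?_ ?_ ?_ ?_ ?_
      · intro i j h
        have : eA.symm i = eA.symm j := Subtype.ext h
        simpa using congrArg eA this
      · intro i j h
        have : eB.symm i = eB.symm j := Subtype.ext h
        simpa using congrArg eB this
      · intro i j
        exact G.ne_of_adj (hcross' _ (eA.symm i).2 _ (eB.symm j).2)
      · intro i j hadj
        by_cases hij : i = j
        · subst hij; exact G.irrefl hadj
        · exact hA'ind _ (eA.symm i).2 _ (eA.symm j).2
            (fun h => hij (by simpa using congrArg eA (Subtype.ext h))) hadj
      · intro i j hadj
        by_cases hij : i = j
        · subst hij; exact G.irrefl hadj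
        · exact hB'ind _ (eB.symm i).2 _ (eB.symm j).2
            (fun h => hij (by simpa using congrArg eB (Subtype.ext h))) hadj
      · intro i j
        exact hcross' _ (eA.symm i).2 _ (eB.symm j).2
end
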